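/- arXiv:1201.3039 — 8 statements merged into one kernel-verified Lean document; each statement's English description precedes it below -/
import Mathlib

section
/- If M is a nonzero injective module over a commutative noetherian local ring (R, m) of positive depth, then M = mM, and hence the m-adic completion of M is zero; in particular M is not m-adically complete. -/
open IsLocalRing

theorem aux_smul_top (R M : Type) [CommRing R] [IsLocalRing R]
    [AddCommGroup M] [Module R M] (hM : Module.Injective R M)
    (hdepth : ∃ x ∈ maximalIdeal R, x ∈ nonZeroDivisors R) :
    (maximalIdeal R) • (⊤ : Submodule R M) = ⊤ := by
  obtain ⟨x, hxm, hx⟩ := hdepth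
  rw [eq_top_iff]
  rintro m -
  -- multiplication by x on R is injective
  have hinj : Function.Injective (LinearMap.lsmul R R x) := by
    intro a b hab
    simp only [LinearMap.lsmul_apply, smul_eq_mul] at hab
    have h0 : (a - b) * x = 0 := by
      rw [sub_mul, mul_comm a x, mul_comm b x, hab, sub_self]
    exact sub_eq_zero.mp (hx.2 _ h0)
  obtain ⟨h, hh⟩ := hM.out (LinearMap.lsmul R R x) hinj
    (LinearMap.smulRight (LinearMap.id : R →ₗ[R] R) m)
  have := hh 1
  simp only [LinearMap.lsmul_apply, LinearMap.smulRight_apply, LinearMap.id_apply,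
    one_smul, mul_one] at this
  have hxh : x • h 1 = m := by
    rw [← this, ← h.map_smul, smul_eq_mul, mul_one]
  rw [← hxh]
  exact Submodule.smul_mem_smul hxm trivial

/-- If `M` is a nonzero injective module over a commutative noetherian local ring `(R, m)`
of positive depth (i.e. `m` contains a nonzerodivisor), then `M = mM`, hence the `m`-adic
completion of `M` is zero; in particular `M` is not `m`-adically complete. -/
theorem stmt_0 (R M : Type) [CommRing R] [IsNoetherianRing R] [IsLocalRing R]
    [AddCommGroup M] [Module R M] [Nontrivial M] (hM : Module.Injective R M)
    (hdepth : ∃ x ∈ maximalIdeal R, x ∈ nonZeroDivisors R) :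
    (maximalIdeal R) • (⊤ : Submodule R M) = ⊤ ∧
      Subsingleton (AdicCompletion (maximalIdeal R) M) ∧
      ¬ IsAdicComplete (maximalIdeal R) M := by
  have htop := aux_smul_top R M hM hdepth
  have hpow : ∀ n : ℕ, (maximalIdeal R) ^ n • (⊤ : Submodule R M) = ⊤ := by
    intro n
    induction n with
    | zero => simp
    | succ n ih =>
      rw [pow_succ, ← smul_eq_mul, Submodule.smul_assoc, htop, ih]
  refine ⟨htop, ?_, ?_⟩
  · constructor
    rintro ⟨a, ha⟩ ⟨b, hb⟩
    ext n
    have : Subsingleton (M ⧸ ((maximalIdeal R) ^ n • (⊤ : Submodule R M))) := by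
      rw [hpow n]
      exact Submodule.Quotient.subsingleton_iff.mpr rfl
    exact Subsingleton.elim _ _
  · intro hcomp
    have hH : IsHausdorff (maximalIdeal R) M := hcomp.toIsHausdorff
    obtain ⟨m, hm⟩ := exists_ne (0 : M)
    apply hm
    apply hH.haus
    intro n
    rw [SModEq.zero, hpow n]
    trivial
end

section
/- Let φ : R → S be a faithfully flat homomorphism of commutative rings. Then the quotient R-module S/φ(R) is flat over R. -/
open TensorProduct
/-- Faithfully flat algebras are pure: `m ↦ m ⊗ 1` is injective for every module `M`. -/
lemma pure_tmul_one_aux (R S : Type) [CommRing R] [CommRing S] [Algebra R S]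
    [Module.FaithfullyFlat R S] (M : Type) [AddCommGroup M] [Module R M] :
    Function.Injective ((TensorProduct.mk R M S).flip 1) := by
  set ι : M →ₗ[R] M ⊗[R] S := (TensorProduct.mk R M S).flip 1 with hι
  -- retraction of `ι.rTensor S`
  set r : (M ⊗[R] S) ⊗[R] S →ₗ[R] M ⊗[R] S :=
    (LinearMap.mul' R S).lTensor M ∘ₗ (TensorProduct.assoc R M S S).toLinearMap with hr
  have hretr : r ∘ₗ ι.rTensor S = LinearMap.id := by
    apply TensorProduct.ext'
    intro x s
    simp [hr, hι]
  -- the inclusion of the kernel is zero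
  set j : (LinearMap.ker ι) →ₗ[R] M := (LinearMap.ker ι).subtype with hj
  have hcomp : ι ∘ₗ j = 0 := by
    ext ⟨x, hx⟩; simpa [hj] using hx
  have hjz : j = 0 := by
    rw [Module.FaithfullyFlat.zero_iff_rTensor_zero R S]
    have : r ∘ₗ (ι.rTensor S ∘ₗ j.rTensor S) = j.rTensor S := by
      rw [← LinearMap.comp_assoc, hretr, LinearMap.id_comp]
    rw [← this, ← LinearMap.rTensor_comp, hcomp]
    simp
  rw [← LinearMap.ker_eq_bot, eq_bot_iff]
  intro x hx
  simpa [hj] using congr($hjz ⟨x, hx⟩)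

/-- If `φ : R → S` is a faithfully flat homomorphism of commutative rings, then the quotient
`R`-module `S / φ(R)` is flat over `R`. -/
theorem stmt_7 (R S : Type) [CommRing R] [CommRing S] [Algebra R S]
    [Module.FaithfullyFlat R S] :
    Module.Flat R (S ⧸ LinearMap.range (Algebra.linearMap R S)) := by
  set φl : R →ₗ[R] S := Algebra.linearMap R S with hφl
  set q : S →ₗ[R] S ⧸ LinearMap.range φl := (LinearMap.range φl).mkQ with hq
  rw [Module.Flat.iff_rTensor_preserves_injective_linearMap]
  intro N N' _ _ _ _ f hf
  rw [← LinearMap.ker_eq_bot, eq_bot_iff]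
  intro x hx
  simp only [LinearMap.mem_ker] at hx
  obtain ⟨y, rfl⟩ := LinearMap.lTensor_surjective N (Submodule.mkQ_surjective _) x
  -- commute the square
  have hcomm : f.rTensor _ (q.lTensor N y) = q.lTensor N' (f.rTensor S y) := by
    have : f.rTensor _ ∘ₗ q.lTensor N = q.lTensor N' ∘ₗ f.rTensor S := by
      rw [LinearMap.rTensor_comp_lTensor, LinearMap.lTensor_comp_rTensor]
    exact congr($this y)
  rw [hcomm] at hx
  -- exactness of N' ⊗ R → N' ⊗ S → N' ⊗ (S/R)
  have hexact : Function.Exact (φl.lTensor N') (q.lTensor N') :=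
    lTensor_exact N' (LinearMap.exact_map_mkQ_range φl) (Submodule.mkQ_surjective _)
  obtain ⟨z, hz⟩ := (hexact _).mp hx
  -- rewrite `z` via the canonical iso `N' ⊗ R ≃ N'`
  have key : ∀ u : N' ⊗[R] R,
      LinearMap.lTensor N' φl u = (TensorProduct.rid R N' u) ⊗ₜ[R] (1 : S) := by
    intro u
    induction u with
    | zero => simp
    | tmul n rr =>
        simp [hφl, Algebra.algebraMap_eq_smul_one, TensorProduct.tmul_smul,
          TensorProduct.smul_tmul]
    | add a b ha hb =>
        simp only [map_add, TensorProduct.add_tmul, ha, hb]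
  set w' : N' := TensorProduct.rid R N' z with hw'
  have hz' : f.rTensor S y = w' ⊗ₜ[R] (1 : S) := by rw [← hz, key]
  -- purity: `w'` lies in the range of `f`
  set p : N' →ₗ[R] N' ⧸ LinearMap.range f := (LinearMap.range f).mkQ with hp
  have hpw : (p w') ⊗ₜ[R] (1 : S) = 0 := by
    have hpf : p ∘ₗ f = 0 := by
      ext n; simp [hp, Submodule.Quotient.mk_eq_zero]
    have h0 : p.rTensor S (f.rTensor S y) = 0 := by
      calc p.rTensor S (f.rTensor S y) = (p ∘ₗ f).rTensor S y := by
            rw [LinearMap.rTensor_comp]; rfl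
        _ = 0 := by rw [hpf]; simp
    rw [hz'] at h0
    simpa using h0
  have hpw0 : p w' = 0 := by
    have := pure_tmul_one_aux R S (N' ⧸ LinearMap.range f)
    have h := this (a₁ := p w') (a₂ := 0) (by simpa using hpw)
    simpa using h
  have hw'mem : w' ∈ LinearMap.range f := by
    simpa [hp, Submodule.Quotient.mk_eq_zero] using hpw0
  obtain ⟨w, hw⟩ := hw'mem
  -- conclude using flatness of S
  have hy : y = w ⊗ₜ[R] (1 : S) := by
    apply Module.Flat.rTensor_preserves_injective_linearMap (M := S) f hf
    rw [hz', ← hw]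
    simp
  rw [hy]
  have h1 : q (1 : S) = 0 := by
    simp [hq, Submodule.Quotient.mk_eq_zero]
    exact ⟨1, map_one (algebraMap R S)⟩
  simp only [LinearMap.lTensor_tmul, h1, TensorProduct.tmul_zero, Submodule.zero_mem]
  rw [← hq, h1, TensorProduct.tmul_zero]
  exact Submodule.zero_mem _
end

section
/- Let φ : (R, m) → (S, mS) be a faithfully flat local homomorphism of commutative noetherian local rings such that the induced map R/m → S/mS is an isomorphism. Then the induced map between m-adic completions φ̂ : R̂ → Ŝ is an isomorphism. -/
open IsLocalRing TensorProduct

section FF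

variable {R S : Type} [CommRing R] [CommRing S] [Algebra R S]

/-- For a faithfully flat algebra, contraction of extended ideals: `IS ∩ R = I`. -/
lemma ff_mem_of_map_mem [Module.FaithfullyFlat R S] (I : Ideal R) (r : R)
    (h : algebraMap R S r ∈ I.map (algebraMap R S)) : r ∈ I := by
  by_contra hr
  set k : R ⧸ I := Ideal.Quotient.mk I r with hk
  have hk0 : k ≠ 0 := by simpa [hk, Ideal.Quotient.eq_zero_iff_mem] using hr
  have h1 : (k ⊗ₜ[R] (1 : S) : (R ⧸ I) ⊗[R] S) = 0 := by
    apply (TensorProduct.quotTensorEquivQuotSMul S I).injective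
    rw [hk, TensorProduct.quotTensorEquivQuotSMul_mk_tmul, map_zero,
      Submodule.Quotient.mk_eq_zero, Ideal.smul_top_eq_map]
    simpa [Algebra.smul_def] using h
  set J : Ideal R := (Submodule.span R {k}).annihilator with hJdef
  have hJker : J = LinearMap.ker ((LinearMap.lsmul R (R ⧸ I)).flip k) := by
    ext x
    simp [hJdef, Submodule.mem_annihilator_span_singleton]
  have hJ : J ≠ ⊤ := by
    intro hJt
    have h1' := (Ideal.eq_top_iff_one J).mp hJt
    rw [hJdef, Submodule.mem_annihilator_span_singleton, one_smul] at h1'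
    exact hk0 h1'
  let inc : R ⧸ J →ₗ[R] R ⧸ I :=
    Submodule.liftQ _ ((LinearMap.lsmul R (R ⧸ I)).flip k) hJker.le
  have hinj : Function.Injective inc :=
    LinearMap.ker_eq_bot.1 (Submodule.ker_liftQ_eq_bot' _ _ hJker)
  have h2 : ((Ideal.Quotient.mk J 1) ⊗ₜ[R] (1 : S) : (R ⧸ J) ⊗[R] S) = 0 := by
    apply Module.Flat.rTensor_preserves_injective_linearMap (M := S) inc hinj
    rw [map_zero, LinearMap.rTensor_tmul]
    have : inc (Ideal.Quotient.mk J 1) = k := by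
      show ((LinearMap.lsmul R (R ⧸ I)).flip k) 1 = k
      simp
    rw [this, h1]
  have h3 : (1 : S) ∈ (J • ⊤ : Submodule R S) := by
    have h2' := congrArg (TensorProduct.quotTensorEquivQuotSMul S J) h2
    rw [TensorProduct.quotTensorEquivQuotSMul_mk_tmul, map_zero,
      Submodule.Quotient.mk_eq_zero, one_smul] at h2'
    exact h2'
  have h4 : (J • ⊤ : Submodule R S) = ⊤ := by
    rw [Ideal.smul_top_eq_map] at h3 ⊢
    rw [(Ideal.eq_top_iff_one _).2 h3]
    rfl
  exact hJ (((Module.FaithfullyFlat.iff_flat_and_ideal_smul_eq_top R S).mp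
    inferInstance).2 J h4)

variable [IsLocalRing R] [IsLocalRing S]

/-- Successive approximation: every element of `S` is congruent to an element of `R`
modulo any power of the maximal ideal of `S`. -/
lemma ff_approx (hS : ∀ s : S, ∃ r : R, s - algebraMap R S r ∈ maximalIdeal S)
    (hmax : (maximalIdeal R).map (algebraMap R S) = maximalIdeal S) :
    ∀ (n : ℕ) (s : S), ∃ r : R, s - algebraMap R S r ∈ (maximalIdeal S) ^ n := by
  have step : ∀ n : ℕ, ∀ x ∈ ((maximalIdeal R) ^ n).map (algebraMap R S),
      ∃ r ∈ (maximalIdeal R) ^ n,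
        x - algebraMap R S r ∈ (maximalIdeal S) ^ (n + 1) := by
    intro n x hx
    refine Submodule.span_induction ?_ ?_ ?_ ?_ hx
    · rintro _ ⟨a, ha, rfl⟩
      exact ⟨a, ha, by simp⟩
    · exact ⟨0, zero_mem _, by simp⟩
    · rintro x y _ _ ⟨r₁, hr₁, hd₁⟩ ⟨r₂, hr₂, hd₂⟩
      refine ⟨r₁ + r₂, add_mem hr₁ hr₂, ?_⟩
      rw [map_add]
      have : x + y - (algebraMap R S r₁ + algebraMap R S r₂)
          = (x - algebraMap R S r₁) + (y - algebraMap R S r₂) := by ring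
      rw [this]
      exact add_mem hd₁ hd₂
    · rintro s x _ ⟨r, hr, hd⟩
      obtain ⟨r', ht⟩ := hS s
      refine ⟨r' * r, Ideal.mul_mem_left _ _ hr, ?_⟩
      have hx' : algebraMap R S r ∈ (maximalIdeal S) ^ n := by
        rw [← hmax, ← Ideal.map_pow]
        exact Ideal.mem_map_of_mem _ hr
      have expand : s • x - algebraMap R S (r' * r)
          = (s - algebraMap R S r') * algebraMap R S r
            + s * (x - algebraMap R S r) := by
        simp only [smul_eq_mul, map_mul]; ring
      rw [expand]
      refine add_mem ?_ (Ideal.mul_mem_left _ _ hd)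
      rw [pow_succ']
      exact Ideal.mul_mem_mul ht hx'
  intro n
  induction n with
  | zero => intro s; exact ⟨0, by simp⟩
  | succ n ih =>
    intro s
    obtain ⟨r, hr⟩ := ih s
    have hr' : s - algebraMap R S r ∈ ((maximalIdeal R) ^ n).map (algebraMap R S) := by
      rwa [Ideal.map_pow, hmax]
    obtain ⟨r₁, -, hd⟩ := step n _ hr'
    refine ⟨r + r₁, ?_⟩
    rwa [map_add, ← sub_sub]

end FF

/-- Let `φ : (R, m) → (S, mS)` be a faithfully flat local homomorphism of commutative noetherian
local rings such that the induced map `R/m → S/mS` is an isomorphism.  Then the induced map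
between `m`-adic completions `φ̂ : R̂ → Ŝ` is an isomorphism.  (Since `mS` is the maximal ideal
of `S`, the `m`-adic and `mS`-adic completions of `S` agree; the induced map is
`AdicCompletion.map` applied to `φ` viewed as an `R`-linear map.) -/
theorem stmt_8 (R S : Type) [CommRing R] [CommRing S] [IsNoetherianRing R] [IsNoetherianRing S]
    [IsLocalRing R] [IsLocalRing S] [Algebra R S] [Module.FaithfullyFlat R S]
    [IsLocalHom (algebraMap R S)]
    (hmax : (maximalIdeal R).map (algebraMap R S) = maximalIdeal S)
    (hres : Function.Bijective (ResidueField.map (algebraMap R S))) :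
    Function.Bijective
      (AdicCompletion.map (maximalIdeal R) (Algebra.linearMap R S)) := by
  set I := maximalIdeal R with hI
  -- surjectivity on residue fields gives approximation modulo the maximal ideal of S
  have hS : ∀ s : S, ∃ r : R, s - algebraMap R S r ∈ maximalIdeal S := by
    intro s
    obtain ⟨x, hx⟩ := hres.2 (residue S s)
    obtain ⟨r, rfl⟩ := Ideal.Quotient.mk_surjective x
    refine ⟨r, ?_⟩
    have h2 : residue S (algebraMap R S r) = residue S s := by
      rw [← ResidueField.map_residue (algebraMap R S) r]; exact hx
    exact (Ideal.Quotient.mk_eq_mk_iff_sub_mem s (algebraMap R S r)).mp h2.symm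
  -- componentwise bijectivity
  have hbij : ∀ n : ℕ,
      Function.Bijective ((Algebra.linearMap R S).reduceModIdeal (I ^ n)) := by
    intro n
    constructor
    · intro x y hxy
      obtain ⟨a, rfl⟩ := Submodule.Quotient.mk_surjective _ x
      obtain ⟨b, rfl⟩ := Submodule.Quotient.mk_surjective _ y
      rw [LinearMap.reduceModIdeal_apply, LinearMap.reduceModIdeal_apply] at hxy
      rw [Submodule.Quotient.eq] at hxy ⊢
      have : algebraMap R S (a - b) ∈ (I ^ n • ⊤ : Submodule R S) := by
        simpa [map_sub] using hxy
      rw [Ideal.smul_top_eq_map] at this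
      have hmem : a - b ∈ I ^ n := ff_mem_of_map_mem (I ^ n) (a - b) this
      simpa [Ideal.smul_top_eq_map, Algebra.algebraMap_self, Ideal.map_id,
        Submodule.restrictScalars_self] using hmem
    · intro y
      obtain ⟨s, rfl⟩ := Submodule.Quotient.mk_surjective _ y
      obtain ⟨r, hr⟩ := ff_approx hS hmax n s
      refine ⟨Submodule.Quotient.mk r, ?_⟩
      rw [LinearMap.reduceModIdeal_apply, Submodule.Quotient.eq]
      have : (algebraMap R S r : S) - s = -(s - algebraMap R S r) := by ring
      rw [Ideal.smul_top_eq_map, Ideal.map_pow, hmax]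
      show (Algebra.linearMap R S) r - s ∈ _
      simp only [Algebra.linearMap_apply, this]
      exact neg_mem hr
  -- assemble
  let e : ∀ n : ℕ, _ ≃ₗ[R ⧸ I ^ n] _ :=
    fun n ↦ LinearEquiv.ofBijective _ (hbij n)
  constructor
  · intro x y hxy
    apply AdicCompletion.ext
    intro n
    apply (hbij n).1
    have := congrArg (fun z ↦ AdicCompletion.eval I S n z) hxy
    simpa only [AdicCompletion.eval_apply, AdicCompletion.map_val_apply] using this
  · intro y
    have hcompat : ∀ {m n : ℕ} (hmn : m ≤ n),
        AdicCompletion.transitionMap I R hmn ((e n).symm (y.val n))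
          = (e m).symm (y.val m) := by
      intro m n hmn
      apply (hbij m).1
      have h1 : ((Algebra.linearMap R S).reduceModIdeal (I ^ m))
            (AdicCompletion.transitionMap I R hmn ((e n).symm (y.val n)))
          = AdicCompletion.transitionMap I S hmn
            (((Algebra.linearMap R S).reduceModIdeal (I ^ n)) ((e n).symm (y.val n))) := by
        exact (LinearMap.congr_fun
          (AdicCompletion.transitionMap_comp_reduceModIdeal I
            (Algebra.linearMap R S) hmn) ((e n).symm (y.val n))).symm
      have h2 : ((Algebra.linearMap R S).reduceModIdeal (I ^ n)) ((e n).symm (y.val n))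
          = y.val n := (e n).apply_symm_apply (y.val n)
      have h3 : ((Algebra.linearMap R S).reduceModIdeal (I ^ m)) ((e m).symm (y.val m))
          = y.val m := (e m).apply_symm_apply (y.val m)
      rw [h1, h2, h3]
      exact y.property hmn
    refine ⟨⟨fun n ↦ (e n).symm (y.val n), hcompat⟩, ?_⟩
    apply AdicCompletion.ext
    intro n
    erw [AdicCompletion.map_val_apply]
    exact (e n).apply_symm_apply (y.val n)
end

section
/- Let φ : (R, m) → (S, mS) be a flat local homomorphism of commutative noetherian local rings inducing an isomorphism on residue fields, and let C be an m-adically complete R-module. Then Hom_R(S/φ(R), C) = 0. -/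
open IsLocalRing

/-- Let `φ : (R, m) → (S, mS)` be a flat local homomorphism of commutative noetherian local
rings inducing an isomorphism on residue fields, and let `C` be an `m`-adically complete
`R`-module.  Then `Hom_R(S/φ(R), C) = 0`. -/
theorem stmt_10 (R S C : Type) [CommRing R] [CommRing S] [IsNoetherianRing R] [IsNoetherianRing S]
    [IsLocalRing R] [IsLocalRing S] [Algebra R S] [Module.Flat R S]
    [IsLocalHom (algebraMap R S)]
    (hmax : (maximalIdeal R).map (algebraMap R S) = maximalIdeal S)
    (hres : Function.Bijective (ResidueField.map (algebraMap R S)))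
    [AddCommGroup C] [Module R C] [IsAdicComplete (maximalIdeal R) C] :
    Subsingleton ((S ⧸ LinearMap.range (Algebra.linearMap R S)) →ₗ[R] C) := by
  set N := LinearMap.range (Algebra.linearMap R S) with hN
  have key : (maximalIdeal R) • (⊤ : Submodule R (S ⧸ N)) = ⊤ := by
    have h1 : (maximalIdeal R) • (⊤ : Submodule R S) =
        (maximalIdeal S).restrictScalars R := by
      rw [Ideal.smul_top_eq_map, hmax]
    have h2 : Submodule.map N.mkQ ((maximalIdeal R) • (⊤ : Submodule R S)) =
        (maximalIdeal R) • (⊤ : Submodule R (S ⧸ N)) := by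
      rw [Submodule.map_smul'', Submodule.map_top, Submodule.range_mkQ]
    rw [← h2, h1, eq_top_iff]
    rintro y -
    obtain ⟨s, rfl⟩ := N.mkQ_surjective y
    obtain ⟨r', hr⟩ := hres.2 (residue S s)
    obtain ⟨r, rfl⟩ := Ideal.Quotient.mk_surjective r'
    have hmem : s - algebraMap R S r ∈ maximalIdeal S := by
      rw [← Ideal.Quotient.eq_zero_iff_mem]
      have : residue S (algebraMap R S r) = residue S s := by
        rw [← ResidueField.map_residue (algebraMap R S) r]; exact hr
      show residue S (s - algebraMap R S r) = 0
      rw [map_sub, this, sub_self]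
    refine ⟨s - algebraMap R S r, hmem, ?_⟩
    show Submodule.Quotient.mk (s - algebraMap R S r) = Submodule.Quotient.mk s
    rw [Submodule.Quotient.eq]
    simpa using ⟨r, rfl⟩
  refine subsingleton_of_forall_eq 0 fun f => ?_
  refine LinearMap.ext fun x => ?_
  show f x = 0
  refine IsHausdorff.haus (inferInstance : IsHausdorff (maximalIdeal R) C) (f x) fun n => ?_
  rw [SModEq.zero]
  have hM : (maximalIdeal R ^ n) • (⊤ : Submodule R (S ⧸ N)) = ⊤ := by
    induction n with
    | zero => rw [pow_zero, Ideal.one_eq_top, Submodule.top_smul]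
    | succ n ih => rw [pow_succ, ← smul_eq_mul, Submodule.smul_assoc, key, ih]
  have hx : x ∈ (maximalIdeal R ^ n) • (⊤ : Submodule R (S ⧸ N)) := by rw [hM]; exact Submodule.mem_top
  have hfx := Submodule.mem_map_of_mem (f := f) hx
  rw [Submodule.map_smul''] at hfx
  exact (smul_mono_right _ le_top : _ ≤ (maximalIdeal R ^ n) • (⊤ : Submodule R C)) hfx
end

section
/- Let φ : (R, m) → (S, mS) be a flat local homomorphism of commutative noetherian local rings inducing an isomorphism on residue fields, and let C be an m-adically complete R-module. Then the evaluation map Hom_R(S, C) → C, f ↦ f(1), is an isomorphism, and C admits an S-module structure compatible with its R-module structure via φ. -/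
open IsLocalRing

lemma flat_local_comap {R S : Type} [CommRing R] [CommRing S] [IsLocalRing R] [IsLocalRing S]
    [Algebra R S] [Module.Flat R S]
    (hmax : (maximalIdeal R).map (algebraMap R S) = maximalIdeal S)
    (I : Ideal R) (a : R) (ha : algebraMap R S a ∈ I.map (algebraMap R S)) : a ∈ I := by
  classical
  have hspan : algebraMap R S a ∈ Submodule.span S ((algebraMap R S) '' (I : Set R)) := ha
  rw [Submodule.mem_span_set'] at hspan
  obtain ⟨n, co, g, hsum⟩ := hspan
  choose b hbI hbg using fun i : Fin n => (g i).2
  have hrel : ∑ i : Option (Fin n),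
      (i.elim a (fun i => - b i)) • (i.elim 1 (fun i => co i) : S) = 0 := by
    rw [Fintype.sum_option]
    have h1 : ∀ i : Fin n, ((- b i) • (co i) : S) = - (co i • (g i : S)) := by
      intro i
      rw [Algebra.smul_def, smul_eq_mul, map_neg, hbg i]
      ring
    simp only [Option.elim]
    rw [Finset.sum_congr rfl (fun i _ => h1 i), Finset.sum_neg_distrib, hsum,
      Algebra.smul_def, mul_one, add_neg_cancel]
  obtain ⟨κ, A, y, hAy, hfA⟩ := Module.Flat.isTrivialRelation_of_sum_smul_eq_zero
    (M := S) (f := fun i : Option (Fin n) => i.elim a (fun i => - b i))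
    (x := fun i : Option (Fin n) => i.elim 1 (fun i => co i)) (by exact hrel)
  have hone : (1 : S) = ∑ j, A none j • y j := hAy none
  have hIj : ∀ j, a * A none j ∈ I := by
    intro j
    have h2 := hfA j
    rw [Fintype.sum_option] at h2
    simp only [Option.elim, neg_mul] at h2
    have h3 : a * A none j = ∑ i, b i * A (some i) j := by
      rw [Finset.sum_neg_distrib] at h2
      linear_combination h2
    rw [h3]
    exact Ideal.sum_mem I (fun i _ => Ideal.mul_mem_right _ I (hbI i))
  by_cases hall : ∀ j, A none j ∈ maximalIdeal R
  · exfalso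
    have h1 : (1 : S) ∈ (maximalIdeal R).map (algebraMap R S) := by
      rw [hone]
      exact Ideal.sum_mem _ (fun j _ => by
        rw [Algebra.smul_def]
        exact Ideal.mul_mem_right _ _ (Ideal.mem_map_of_mem _ (hall j)))
    rw [hmax] at h1
    exact (maximalIdeal.isMaximal S).ne_top ((Ideal.eq_top_iff_one _).2 h1)
  · push_neg at hall
    obtain ⟨j, hj⟩ := hall
    have hu : IsUnit (A none j) := by
      by_contra h
      exact hj ((mem_maximalIdeal _).2 h)
    have h4 := I.mul_mem_left (↑hu.unit⁻¹) (hIj j)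
    rwa [mul_comm a, ← mul_assoc, IsUnit.val_inv_mul, one_mul] at h4

lemma approx_one {R S : Type} [CommRing R] [CommRing S] [IsLocalRing R] [IsLocalRing S]
    [Algebra R S] [IsLocalHom (algebraMap R S)]
    (hmax : (maximalIdeal R).map (algebraMap R S) = maximalIdeal S)
    (hres : Function.Surjective (ResidueField.map (algebraMap R S)))
    (s : S) : ∃ r : R, s - algebraMap R S r ∈ (maximalIdeal R).map (algebraMap R S) := by
  obtain ⟨x, hx⟩ := hres (residue S s)
  obtain ⟨r, rfl⟩ := Ideal.Quotient.mk_surjective x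
  refine ⟨r, ?_⟩
  rw [hmax]
  have : residue S (algebraMap R S r) = residue S s := by
    rw [← ResidueField.map_residue (algebraMap R S) r]
    exact hx
  rw [← neg_mem_iff, neg_sub]
  exact (Ideal.Quotient.eq (I := maximalIdeal S)).1 this

lemma approx_pow {R S : Type} [CommRing R] [CommRing S] [IsLocalRing R] [IsLocalRing S]
    [Algebra R S] [IsLocalHom (algebraMap R S)]
    (hmax : (maximalIdeal R).map (algebraMap R S) = maximalIdeal S)
    (hres : Function.Surjective (ResidueField.map (algebraMap R S)))
    (n : ℕ) (s : S) :
    ∃ r : R, s - algebraMap R S r ∈ (maximalIdeal R ^ n).map (algebraMap R S) := by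
  induction n generalizing s with
  | zero => exact ⟨0, by simp [Ideal.one_eq_top, Ideal.map_top]⟩
  | succ n ih =>
    obtain ⟨r, hr⟩ := ih s
    suffices h : ∀ x ∈ (maximalIdeal R ^ n).map (algebraMap R S),
        ∃ r' : R, x - algebraMap R S r' ∈ (maximalIdeal R ^ (n + 1)).map (algebraMap R S) by
      obtain ⟨r', hr'⟩ := h _ hr
      refine ⟨r + r', ?_⟩
      rw [map_add]
      rw [show s - (algebraMap R S r + algebraMap R S r')
        = s - algebraMap R S r - algebraMap R S r' by ring]
      exact hr'
    intro x hx
    have hx' : x ∈ Submodule.span S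
      ((algebraMap R S) '' ((maximalIdeal R ^ n : Ideal R) : Set R)) := hx
    clear hx
    induction hx' using Submodule.span_induction with
    | mem z hz =>
      obtain ⟨b, hb, rfl⟩ := hz
      exact ⟨b, by simp⟩
    | zero => exact ⟨0, by simp⟩
    | add z w hz hw ihz ihw =>
      obtain ⟨r1, h1⟩ := ihz
      obtain ⟨r2, h2⟩ := ihw
      refine ⟨r1 + r2, ?_⟩
      rw [map_add, show z + w - (algebraMap R S r1 + algebraMap R S r2)
        = (z - algebraMap R S r1) + (w - algebraMap R S r2) by ring]
      exact Ideal.add_mem _ h1 h2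
    | smul c z hz ihz' =>
      obtain ⟨r', h'⟩ := ihz'
      obtain ⟨r'', h''⟩ := approx_one hmax hres c
      refine ⟨r'' * r', ?_⟩
      have key : c • z - algebraMap R S (r'' * r')
          = algebraMap R S r'' * (z - algebraMap R S r')
            + (c - algebraMap R S r'') * z := by
        rw [map_mul, smul_eq_mul]; ring
      rw [key]
      refine Ideal.add_mem _ (Ideal.mul_mem_left _ _ h') ?_
      have hz' : z ∈ (maximalIdeal R ^ n).map (algebraMap R S) := hz
      have hpow : (maximalIdeal R ^ (n + 1)).map (algebraMap R S)
          = (maximalIdeal R).map (algebraMap R S)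
            * (maximalIdeal R ^ n).map (algebraMap R S) := by
        rw [← Ideal.map_mul, ← pow_succ']
      rw [hpow]
      exact Ideal.mul_mem_mul h'' hz'

/-- `M` admits an `S`-module structure whose restriction of scalars along the algebra map
`R → S` recovers the given `R`-module structure. -/
def HasCompatibleModuleStructure (R S M : Type) [CommRing R] [CommRing S] [Algebra R S]
    [AddCommGroup M] [Module R M] : Prop :=
  ∃ hmod : Module S M, ∀ (r : R) (m : M),
    @SMul.smul S M hmod.toDistribMulAction.toMulAction.toSMul (algebraMap R S r) m = r • m

/-- Let `φ : (R, m) → (S, mS)` be a flat local homomorphism of commutative noetherian local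
rings inducing an isomorphism on residue fields, and let `C` be an `m`-adically complete
`R`-module.  Then the evaluation map `Hom_R(S, C) → C`, `f ↦ f(1)`, is an isomorphism, and `C`
admits an `S`-module structure compatible with its `R`-module structure via `φ`. -/
theorem stmt_11 (R S C : Type) [CommRing R] [CommRing S] [IsNoetherianRing R] [IsNoetherianRing S]
    [IsLocalRing R] [IsLocalRing S] [Algebra R S] [Module.Flat R S]
    [IsLocalHom (algebraMap R S)]
    (hmax : (maximalIdeal R).map (algebraMap R S) = maximalIdeal S)
    (hres : Function.Bijective (ResidueField.map (algebraMap R S)))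
    [AddCommGroup C] [Module R C] [IsAdicComplete (maximalIdeal R) C] :
    Function.Bijective (fun f : S →ₗ[R] C => f 1) ∧
      HasCompatibleModuleStructure R S C := by
  classical
  have hres' : Function.Surjective (ResidueField.map (algebraMap R S)) := hres.2
  choose r hr using fun (s : S) (n : ℕ) => approx_pow hmax hres' n s
  -- images of ideal powers under linear maps land in `m ^ n • ⊤`
  have hsub : ∀ (f : S →ₗ[R] C) (n : ℕ) (x : S),
      x ∈ (maximalIdeal R ^ n).map (algebraMap R S) →
      f x ∈ (maximalIdeal R ^ n • ⊤ : Submodule R C) := by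
    intro f n x hx
    have hx2 : x ∈ (maximalIdeal R ^ n) • (⊤ : Submodule R S) := by
      rw [Ideal.smul_top_eq_map]; exact hx
    have hmem : f x ∈ Submodule.map f ((maximalIdeal R ^ n) • (⊤ : Submodule R S)) :=
      ⟨x, hx2, rfl⟩
    rw [Submodule.map_smul''] at hmem
    exact Submodule.smul_mono le_rfl le_top hmem
  -- how the approximations relate in `R`
  have hmemR : ∀ (n : ℕ) (s : S) (a : R),
      s - algebraMap R S a ∈ (maximalIdeal R ^ n).map (algebraMap R S) →
      r s n - a ∈ maximalIdeal R ^ n := by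
    intro n s a h
    apply flat_local_comap hmax
    rw [map_sub]
    have h1 := hr s n
    rw [show algebraMap R S (r s n) - algebraMap R S a
      = (s - algebraMap R S a) - (s - algebraMap R S (r s n)) by ring]
    exact sub_mem h h1
  have hsmulmem : ∀ {n : ℕ} (a : R), a ∈ maximalIdeal R ^ n → ∀ (x : C),
      a • x ∈ (maximalIdeal R ^ n • ⊤ : Submodule R C) :=
    fun a ha x => Submodule.smul_mem_smul ha Submodule.mem_top
  -- injectivity
  have hker : ∀ f : S →ₗ[R] C, f 1 = 0 → f = 0 := by
    intro f h0
    ext s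
    refine IsHausdorff.haus (inferInstance : IsHausdorff (maximalIdeal R) C) (f s)
      (fun n => SModEq.zero.2 ?_)
    have h2 : f (algebraMap R S (r s n)) = (r s n) • f 1 := by
      rw [Algebra.algebraMap_eq_smul_one, map_smul]
    have h3 := hsub f n _ (hr s n)
    rwa [map_sub, h2, h0, smul_zero, sub_zero] at h3
  have hinj : Function.Injective (fun f : S →ₗ[R] C => f 1) := by
    intro f g hfg
    simp only at hfg
    have h0 : (f - g) 1 = 0 := by rw [LinearMap.sub_apply, hfg, sub_self]
    have := hker _ h0
    rwa [sub_eq_zero] at this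
  -- surjectivity
  have hsurj : Function.Surjective (fun f : S →ₗ[R] C => f 1) := by
    intro c
    have hcauchy : ∀ s : S, ∀ {a b : ℕ}, a ≤ b →
        (r s a) • c ≡ (r s b) • c [SMOD ((maximalIdeal R) ^ a • ⊤ : Submodule R C)] := by
      intro s a b hab
      rw [SModEq.sub_mem, ← sub_smul]
      refine Submodule.smul_mem_smul ?_ Submodule.mem_top
      apply flat_local_comap hmax
      rw [map_sub]
      have h1 := hr s a
      have h2 : s - algebraMap R S (r s b)
          ∈ (maximalIdeal R ^ a).map (algebraMap R S) :=
        Ideal.map_mono (Ideal.pow_le_pow_right hab) (hr s b)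
      rw [show algebraMap R S (r s a) - algebraMap R S (r s b)
        = (s - algebraMap R S (r s b)) - (s - algebraMap R S (r s a)) by ring]
      exact sub_mem h2 h1
    choose F hF using fun s : S =>
      IsPrecomplete.prec (inferInstance : IsPrecomplete (maximalIdeal R) C)
        (f := fun n => r s n • c) (fun {a b} hab => hcauchy s hab)
    have hFd : ∀ (s : S) (n : ℕ),
        F s - r s n • c ∈ (maximalIdeal R ^ n • ⊤ : Submodule R C) := by
      intro s n
      have := (hF s n).symm
      rwa [SModEq.sub_mem] at this
    have haus := (inferInstance : IsHausdorff (maximalIdeal R) C)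
    -- additivity
    have hFadd : ∀ s t : S, F (s + t) = F s + F t := by
      intro s t
      have hz : F (s + t) - (F s + F t) = 0 := by
        refine haus.haus _ (fun n => SModEq.zero.2 ?_)
        have hco : r (s + t) n - (r s n + r t n) ∈ maximalIdeal R ^ n := by
          refine hmemR n (s + t) (r s n + r t n) ?_
          rw [map_add, show s + t - (algebraMap R S (r s n) + algebraMap R S (r t n))
            = (s - algebraMap R S (r s n)) + (t - algebraMap R S (r t n)) by ring]
          exact add_mem (hr s n) (hr t n)
        have hdec : F (s + t) - (F s + F t)
            = (F (s + t) - r (s + t) n • c) - (F s - r s n • c) - (F t - r t n • c)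
              + ((r (s + t) n - (r s n + r t n)) • c) := by
          rw [sub_smul, add_smul]
          abel
        rw [hdec]
        exact add_mem (sub_mem (sub_mem (hFd (s + t) n) (hFd s n)) (hFd t n))
          (hsmulmem _ hco c)
      rw [← sub_eq_zero]
      rw [← hz]
    -- compatibility with scalars
    have hFsmul : ∀ (a : R) (s : S), F (a • s) = a • F s := by
      intro a s
      have hz : F (a • s) - a • F s = 0 := by
        refine haus.haus _ (fun n => SModEq.zero.2 ?_)
        have hco : r (a • s) n - a * r s n ∈ maximalIdeal R ^ n := by
          refine hmemR n (a • s) (a * r s n) ?_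
          rw [map_mul, Algebra.smul_def, show algebraMap R S a * s
            - algebraMap R S a * algebraMap R S (r s n)
            = algebraMap R S a * (s - algebraMap R S (r s n)) by ring]
          exact Ideal.mul_mem_left _ _ (hr s n)
        have hdec : F (a • s) - a • F s
            = (F (a • s) - r (a • s) n • c) - a • (F s - r s n • c)
              + ((r (a • s) n - a * r s n) • c) := by
          rw [sub_smul, mul_smul, smul_sub]
          abel
        rw [hdec]
        exact add_mem (sub_mem (hFd (a • s) n) (Submodule.smul_mem _ a (hFd s n)))
          (hsmulmem _ hco c)
      rw [← sub_eq_zero]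
      rw [← hz]
    have hF1 : F 1 = c := by
      have hz : F 1 - c = 0 := by
        refine haus.haus _ (fun n => SModEq.zero.2 ?_)
        have hco : r 1 n - 1 ∈ maximalIdeal R ^ n := by
          refine hmemR n 1 1 ?_
          simp
        have hdec : F 1 - c = (F 1 - r 1 n • c) + ((r 1 n - 1) • c) := by
          rw [sub_smul, one_smul]
          abel
        rw [hdec]
        exact add_mem (hFd 1 n) (hsmulmem _ hco c)
      rw [← sub_eq_zero]
      rw [← hz]
    exact ⟨{ toFun := F, map_add' := hFadd, map_smul' := hFsmul }, hF1⟩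
  have hbij : Function.Bijective (fun f : S →ₗ[R] C => f 1) := ⟨hinj, hsurj⟩
  refine ⟨hbij, ?_⟩
  -- the compatible module structure
  let ev : (S →ₗ[R] C) →ₗ[R] C :=
    { toFun := fun f => f 1, map_add' := fun f g => rfl, map_smul' := fun a f => rfl }
  let e : (S →ₗ[R] C) ≃ₗ[R] C := LinearEquiv.ofBijective ev hbij
  have h1 : ∀ c : C, (e.symm c) 1 = c := fun c => e.apply_symm_apply c
  have hsymm_eq : ∀ (c : C) (g : S →ₗ[R] C), g 1 = c → e.symm c = g := by
    intro c g hg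
    apply e.injective
    rw [e.apply_symm_apply]
    exact hg.symm
  refine ⟨{ smul := fun s c => e.symm c s
            one_smul := fun c => h1 c
            mul_smul := fun s t c => ?_
            smul_zero := fun s => ?_
            smul_add := fun s c c' => ?_
            add_smul := fun s t c => ?_
            zero_smul := fun c => ?_ }, fun a c => ?_⟩
  · show e.symm c (s * t) = e.symm (e.symm c t) s
    have heq : e.symm (e.symm c t) = (e.symm c).comp (LinearMap.mulRight R t) :=
      hsymm_eq _ _ (by simp)
    rw [heq]
    simp
  · show e.symm 0 s = 0
    rw [map_zero]
    rfl
  · show e.symm (c + c') s = e.symm c s + e.symm c' s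
    rw [map_add]
    rfl
  · show e.symm c (s + t) = e.symm c s + e.symm c t
    rw [map_add]
  · show e.symm c 0 = 0
    rw [map_zero]
  · show e.symm c (algebraMap R S a) = a • c
    rw [Algebra.algebraMap_eq_smul_one, map_smul, h1]
end

section
/- Let R be a discrete valuation ring that is not complete, with completion R̂. Then Hom_R(R̂, R) = 0. -/
open IsLocalRing AdicCompletion

lemma aux_smul_top_s13 {R : Type} [CommRing R] (I : Ideal R) (n : ℕ) :
    (I ^ n • ⊤ : Submodule R R) = I ^ n := by
  rw [smul_eq_mul, Ideal.mul_top]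

/-- Key lemma: `mk a - of (a n)` lies in `I^n • ⊤` in the adic completion, for a DVR. -/
lemma aux_key (R : Type) [CommRing R] [IsDomain R] [IsDiscreteValuationRing R]
    (a : AdicCauchySequence (maximalIdeal R) R) (n : ℕ) :
    AdicCompletion.mk (maximalIdeal R) R a - AdicCompletion.of (maximalIdeal R) R (a n)
      ∈ (maximalIdeal R ^ n • ⊤ : Submodule R (AdicCompletion (maximalIdeal R) R)) := by
  obtain ⟨ϖ, hϖ⟩ := IsDiscreteValuationRing.exists_irreducible R
  have hspan := (IsDiscreteValuationRing.irreducible_iff_uniformizer ϖ).mp hϖ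
  have hdvd : ∀ (k : ℕ) (x : R), x ∈ (maximalIdeal R ^ k • ⊤ : Submodule R R) → ϖ ^ k ∣ x := by
    intro k x hx
    rwa [aux_smul_top_s13, hspan, Ideal.span_singleton_pow, Ideal.mem_span_singleton] at hx
  have hmem : ∀ (k : ℕ) (x : R), ϖ ^ k ∣ x → x ∈ (maximalIdeal R ^ k • ⊤ : Submodule R R) := by
    intro k x hx
    rwa [aux_smul_top_s13, hspan, Ideal.span_singleton_pow, Ideal.mem_span_singleton]
  have hb : ∀ m : ℕ, ϖ ^ n ∣ a (m + n) - a n := by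
    intro m
    apply hdvd
    rw [← SModEq.sub_mem]
    exact SModEq.symm (a.property (Nat.le_add_left n m))
  choose d hd using hb
  have hdc : IsAdicCauchy (maximalIdeal R) R d := by
    intro k l hkl
    rw [SModEq.sub_mem]
    apply hmem
    have h2 : ϖ ^ n * (d k - d l) = a (k + n) - a (l + n) := by
      rw [mul_sub, ← hd k, ← hd l]; ring
    have h1 : ϖ ^ (k + n) ∣ a (k + n) - a (l + n) := by
      have := a.property (show k + n ≤ l + n by omega)
      rw [SModEq.sub_mem] at this
      exact hdvd _ _ this
    have h4 : ϖ ^ n * ϖ ^ k ∣ ϖ ^ n * (d k - d l) := by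
      rw [h2, ← pow_add, add_comm n k]
      exact h1
    exact (mul_dvd_mul_iff_left (pow_ne_zero n hϖ.ne_zero)).mp h4
  have hclaim : AdicCompletion.mk (maximalIdeal R) R a
        - AdicCompletion.of (maximalIdeal R) R (a n)
      = ϖ ^ n • AdicCompletion.mk (maximalIdeal R) R ⟨d, hdc⟩ := by
    apply AdicCompletion.ext
    intro k
    rw [AdicCompletion.val_sub, AdicCompletion.val_smul]
    show Submodule.Quotient.mk (p := (maximalIdeal R ^ k • ⊤ : Submodule R R)) (a k)
        - Submodule.Quotient.mk (p := (maximalIdeal R ^ k • ⊤ : Submodule R R)) (a n)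
        = ϖ ^ n • Submodule.Quotient.mk (p := (maximalIdeal R ^ k • ⊤ : Submodule R R)) (d k)
    rw [← Submodule.Quotient.mk_sub, ← Submodule.Quotient.mk_smul,
      Submodule.Quotient.eq]
    have h5 : a k - a n - ϖ ^ n • d k = a k - a (k + n) := by
      rw [smul_eq_mul, ← hd k]; ring
    rw [h5, ← SModEq.sub_mem]
    exact a.property (Nat.le_add_right k n)
  rw [hclaim]
  exact Submodule.smul_mem_smul
    (by rw [hspan, Ideal.span_singleton_pow]; exact Ideal.mem_span_singleton_self _)
    trivial

lemma aux_haus (R : Type) [CommRing R] [IsDomain R] [IsDiscreteValuationRing R]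
    (x : R) (h : ∀ n : ℕ, x ∈ maximalIdeal R ^ n) : x = 0 := by
  by_contra hx
  obtain ⟨ϖ, hϖ⟩ := IsDiscreteValuationRing.exists_irreducible R
  obtain ⟨m, u, rfl⟩ := IsDiscreteValuationRing.eq_unit_mul_pow_irreducible hx hϖ
  have h1 := h (m + 1)
  rw [(IsDiscreteValuationRing.irreducible_iff_uniformizer ϖ).mp hϖ,
    Ideal.span_singleton_pow, Ideal.mem_span_singleton] at h1
  have h2 : ϖ ^ m * ϖ ∣ ϖ ^ m * (u : R) := by
    rw [← pow_succ]
    exact dvd_trans h1 ⟨1, by ring⟩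
  have h3 : (ϖ : R) ∣ (u : R) :=
    (mul_dvd_mul_iff_left (pow_ne_zero m hϖ.ne_zero)).mp h2
  exact hϖ.not_isUnit (isUnit_of_dvd_unit h3 u.isUnit)

/-- If `R` is a discrete valuation ring that is not complete, with completion `R̂`, then
`Hom_R(R̂, R) = 0`. -/
theorem stmt_13 (R : Type) [CommRing R] [IsDomain R] [IsDiscreteValuationRing R]
    (hnc : ¬ IsAdicComplete (maximalIdeal R) R) :
    Subsingleton (AdicCompletion (maximalIdeal R) R →ₗ[R] R) := by
  obtain ⟨ϖ, hϖ⟩ := IsDiscreteValuationRing.exists_irreducible R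
  have hspan := (IsDiscreteValuationRing.irreducible_iff_uniformizer ϖ).mp hϖ
  refine subsingleton_of_forall_eq 0 fun f => ?_
  obtain ⟨c, hc⟩ : ∃ c : R, f (AdicCompletion.of (maximalIdeal R) R 1) = c := ⟨_, rfl⟩
  have hof : ∀ r : R, f (AdicCompletion.of (maximalIdeal R) R r) = r * c := by
    intro r
    have h1 : (AdicCompletion.of (maximalIdeal R) R) r
        = r • (AdicCompletion.of (maximalIdeal R) R) 1 := by
      rw [← map_smul, smul_eq_mul, mul_one]
    rw [h1, map_smul, hc, smul_eq_mul]
  have hpow : ∀ (n : ℕ) (x : R), x ∈ maximalIdeal R ^ n ↔ ϖ ^ n ∣ x := by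
    intro n x
    rw [hspan, Ideal.span_singleton_pow, Ideal.mem_span_singleton]
  have hfa : ∀ (a : AdicCauchySequence (maximalIdeal R) R) (n : ℕ),
      f (AdicCompletion.mk (maximalIdeal R) R a) - a n * c ∈ maximalIdeal R ^ n := by
    intro a n
    have h := Submodule.mem_map_of_mem (f := f) (aux_key R a n)
    rw [Submodule.map_smul''] at h
    have h2 := smul_mono_right _
      (le_top : Submodule.map f ⊤ ≤ (⊤ : Submodule R R)) h
    rw [aux_smul_top_s13] at h2
    rwa [map_sub, hof] at h2
  by_cases hc0 : c = 0
  · apply LinearMap.ext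
    intro y
    obtain ⟨a, rfl⟩ := AdicCompletion.mk_surjective (maximalIdeal R) R y
    refine aux_haus R _ fun n => ?_
    have := hfa a n
    simpa [hc0] using this
  · exfalso
    obtain ⟨k, u, hcu⟩ := IsDiscreteValuationRing.eq_unit_mul_pow_irreducible hc0 hϖ
    have huinv : ((u⁻¹ : Rˣ) : R) * (u : R) = 1 := by exact_mod_cast u.inv_mul
    have hsurj : Function.Surjective (AdicCompletion.of (maximalIdeal R) R) := by
      intro y
      obtain ⟨a, rfl⟩ := AdicCompletion.mk_surjective (maximalIdeal R) R y
      have hmk : ∀ n : ℕ, ϖ ^ n ∣ f (AdicCompletion.mk (maximalIdeal R) R a) - a n * c := by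
        intro n
        have := hfa a n
        rwa [hpow] at this
      have hfk : ϖ ^ k ∣ f (AdicCompletion.mk (maximalIdeal R) R a) := by
        have h2 : ϖ ^ k ∣ a k * c := ⟨a k * u, by rw [hcu]; ring⟩
        simpa using dvd_add (hmk k) h2
      obtain ⟨t', ht'⟩ := hfk
      obtain ⟨t, htdef⟩ : ∃ t : R, ((u⁻¹ : Rˣ) : R) * t' = t := ⟨_, rfl⟩
      have hct : t * c = f (AdicCompletion.mk (maximalIdeal R) R a) := by
        rw [← htdef, hcu, ht']
        calc ((u⁻¹ : Rˣ) : R) * t' * ((u : Rˣ) * ϖ ^ k)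
            = (((u⁻¹ : Rˣ) : R) * (u : R)) * (t' * ϖ ^ k) := by ring
          _ = ϖ ^ k * t' := by rw [huinv]; ring
      have hat : ∀ n : ℕ, ϖ ^ n ∣ a (n + k) - t := by
        intro n
        have h1 : ϖ ^ (n + k) ∣ (a (n + k) - t) * c := by
          have hd := hmk (n + k)
          have heq : (a (n + k) - t) * c
              = -(f (AdicCompletion.mk (maximalIdeal R) R a) - a (n + k) * c) := by
            rw [← hct]; ring
          rw [heq]
          exact dvd_neg.mpr hd
        have h2 : ϖ ^ n * ϖ ^ k ∣ ((a (n + k) - t) * (u : R)) * ϖ ^ k := by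
          rw [← pow_add]
          have heq : ((a (n + k) - t) * (u : R)) * ϖ ^ k = (a (n + k) - t) * c := by
            rw [hcu]; ring
          rw [heq]; exact h1
        have h3 : ϖ ^ n ∣ (a (n + k) - t) * (u : R) :=
          (mul_dvd_mul_iff_right (pow_ne_zero k hϖ.ne_zero)).mp h2
        have h4 : ϖ ^ n ∣ (a (n + k) - t) * (u : R) * ((u⁻¹ : Rˣ) : R) :=
          Dvd.dvd.mul_right h3 _
        rwa [mul_assoc, mul_comm (u : R), huinv, mul_one] at h4
      refine ⟨t, ?_⟩
      have hy : ∀ n : ℕ, AdicCompletion.mk (maximalIdeal R) R a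
          - AdicCompletion.of (maximalIdeal R) R t
          ∈ (maximalIdeal R ^ n • ⊤ :
              Submodule R (AdicCompletion (maximalIdeal R) R)) := by
        intro n
        have e1 := Submodule.smul_mono_left
          (Ideal.pow_le_pow_right (show n ≤ n + k by omega)) (aux_key R a (n + k))
        have e2 : AdicCompletion.of (maximalIdeal R) R (a (n + k))
            - AdicCompletion.of (maximalIdeal R) R t
            ∈ (maximalIdeal R ^ n • ⊤ :
                Submodule R (AdicCompletion (maximalIdeal R) R)) := by
          rw [← map_sub]
          have hmem : a (n + k) - t ∈ maximalIdeal R ^ n := by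
            rw [hpow]
            exact hat n
          have heq : AdicCompletion.of (maximalIdeal R) R (a (n + k) - t)
              = (a (n + k) - t) • AdicCompletion.of (maximalIdeal R) R 1 := by
            rw [← map_smul, smul_eq_mul, mul_one]
          rw [heq]
          exact Submodule.smul_mem_smul hmem trivial
        have := Submodule.add_mem _ e1 e2
        rwa [sub_add_sub_cancel] at this
      have hh := (inferInstance :
        IsHausdorff (maximalIdeal R) (AdicCompletion (maximalIdeal R) R))
      have := hh.haus _ fun n => SModEq.zero.mpr (hy n)
      rw [sub_eq_zero] at this
      exact this.symm
    have hH : IsHausdorff (maximalIdeal R) R := by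
      constructor
      intro x hx
      refine aux_haus R x fun n => ?_
      have := SModEq.zero.mp (hx n)
      rwa [aux_smul_top_s13] at this
    have hP : IsPrecomplete (maximalIdeal R) R := by
      constructor
      intro g hg
      obtain ⟨t, ht⟩ := hsurj (AdicCompletion.mk (maximalIdeal R) R
        ⟨g, fun {m n} h => hg h⟩)
      refine ⟨t, fun n => ?_⟩
      have := congrArg (fun z => z.val n) ht
      simp only [AdicCompletion.of_apply, AdicCompletion.mk_apply_coe] at this
      rw [SModEq.def]
      exact (this.symm : _)
    exact hnc { toIsHausdorff := hH, toIsPrecomplete := hP }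
end

section
/- Let R be a discrete valuation ring that is not complete, with completion R̂, fraction field K, and K̃ = Q(R̂). Then there is an R-module isomorphism R̂/R ≅ K̃/K. -/
open IsLocalRing AdicCompletion

namespace Stmt14Aux

variable {R : Type} [CommRing R] [IsDomain R] [IsDiscreteValuationRing R]

local notation "A" => AdicCompletion (maximalIdeal R) R

theorem algebraMap_eq_of (r : R) : algebraMap R A r = AdicCompletion.of (maximalIdeal R) R r := rfl

theorem mem_smul_top_iff (n : ℕ) (x : R) :
    x ∈ ((maximalIdeal R) ^ n • ⊤ : Submodule R R) ↔ x ∈ (maximalIdeal R) ^ n := by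
  rw [smul_eq_mul, Ideal.mul_top]

theorem mem_of_dvd_mem {I : Ideal R} {x y : R} (hx : x ∈ I) (h : x ∣ y) : y ∈ I := by
  obtain ⟨c, rfl⟩ := h; exact I.mul_mem_right c hx

theorem isUnit_one_add {ϖ : R} (hϖ : ϖ ∈ maximalIdeal R) (b : A) :
    IsUnit (1 + algebraMap R A ϖ * b) := by
  obtain ⟨f, rfl⟩ := AdicCompletion.mk_surjective _ _ b
  have hseq : ∀ n, (∑ i ∈ Finset.range n, (-(ϖ * f n)) ^ i) ≡
      (∑ i ∈ Finset.range (n+1), (-(ϖ * f (n+1))) ^ i)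
        [SMOD ((maximalIdeal R) ^ n • ⊤ : Submodule R R)] := by
    intro n
    rw [SModEq.sub_mem, mem_smul_top_iff, Finset.sum_range_succ, sub_add_eq_sub_sub,
      ← Finset.sum_sub_distrib]
    apply Ideal.sub_mem
    · apply Ideal.sum_mem
      intro i _
      have hd : (-(ϖ * f n)) - (-(ϖ * f (n + 1))) ∈ (maximalIdeal R) ^ n := by
        have hf : f (n + 1) - f n ∈ (maximalIdeal R) ^ n := by
          rw [← mem_smul_top_iff]
          exact (SModEq.sub_mem.mp (f.property (Nat.le_succ n)).symm)
        have : (-(ϖ * f n)) - (-(ϖ * f (n + 1))) = ϖ * (f (n + 1) - f n) := by ring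
        rw [this]
        exact Ideal.mul_mem_left _ _ hf
      exact mem_of_dvd_mem hd (sub_dvd_pow_sub_pow _ _ i)
    · have : (-(ϖ * f (n + 1))) ^ n ∈ (maximalIdeal R) ^ n := by
        apply Ideal.pow_mem_pow
        exact neg_mem (Ideal.mul_mem_right _ _ hϖ)
      exact this
  refine IsUnit.of_mul_eq_one
    (AdicCompletion.mk _ _ (AdicCauchySequence.mk _ _
      (fun k => ∑ i ∈ Finset.range k, (-(ϖ * f k)) ^ i) hseq)) ?_
  ext n
  simp only [AdicCompletion.val_mul, AdicCompletion.val_add, AdicCompletion.val_one,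
    AdicCompletion.mk_apply_coe, Submodule.mkQ_apply, Pi.add_apply, AdicCauchySequence.mk_coe]
  have hval : (algebraMap R A ϖ).val n = Submodule.Quotient.mk ϖ := rfl
  rw [hval]
  rw [Ideal.Quotient.mk_eq_mk, Ideal.Quotient.mk_eq_mk, Ideal.Quotient.mk_eq_mk,
    show (1 : R ⧸ ((maximalIdeal R) ^ n • ⊤ : Ideal R)) = Ideal.Quotient.mk _ 1 from (map_one _).symm,
    ← map_mul, ← map_add, ← map_mul]
  rw [Ideal.Quotient.eq]
  have hgeo := geom_sum_mul (-(ϖ * f n)) n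
  have hkey : (1 + ϖ * f n) * (∑ i ∈ Finset.range n, (-(ϖ * f n)) ^ i) - 1
      = -((-(ϖ * f n)) ^ n) := by linear_combination -hgeo
  rw [mem_smul_top_iff, hkey]
  exact neg_mem (Ideal.pow_mem_pow (neg_mem (Ideal.mul_mem_right _ _ hϖ)) n)


theorem density {ϖ : R} (hϖ : Irreducible ϖ) (x : A) (n : ℕ) :
    ∃ (r : R) (c : A), x = algebraMap R A r + algebraMap R A (ϖ ^ n) * c := by
  obtain ⟨f, rfl⟩ := AdicCompletion.mk_surjective _ _ x
  have hmax := hϖ.maximalIdeal_eq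
  have hspan : ∀ k : ℕ, (maximalIdeal R) ^ k = Ideal.span {ϖ ^ k} := by
    intro k; rw [hmax, Ideal.span_singleton_pow]
  have hdvd : ∀ k : ℕ, ∃ d : R, f (n + k) - f n = ϖ ^ n * d := by
    intro k
    have : f (n + k) - f n ∈ (maximalIdeal R) ^ n := by
      rw [← mem_smul_top_iff]
      exact SModEq.sub_mem.mp (f.property (Nat.le_add_right n k)).symm
    rw [hspan n, Ideal.mem_span_singleton] at this
    exact this
  choose d hd using hdvd
  have hcauchy : ∀ k, d k ≡ d (k + 1) [SMOD ((maximalIdeal R) ^ k • ⊤ : Submodule R R)] := by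
    intro k
    rw [SModEq.sub_mem, mem_smul_top_iff, hspan k, Ideal.mem_span_singleton]
    have hstep : f (n + (k + 1)) - f (n + k) ∈ (maximalIdeal R) ^ (n + k) := by
      rw [← mem_smul_top_iff]
      exact SModEq.sub_mem.mp (f.property (by omega)).symm
    rw [hspan (n + k), Ideal.mem_span_singleton] at hstep
    obtain ⟨e, he⟩ := hstep
    have hmul : ϖ ^ n * (d (k + 1) - d k) = ϖ ^ n * (ϖ ^ k * e) := by
      have h1 := hd k
      have h2 := hd (k + 1)
      have : ϖ ^ (n + k) = ϖ ^ n * ϖ ^ k := pow_add ϖ n k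
      linear_combination h1 - h2 + he + e * this
    have hcan := mul_left_cancel₀ (pow_ne_zero n hϖ.ne_zero) hmul
    exact ⟨-e, by rw [show d k - d (k + 1) = -(d (k+1) - d k) by ring, hcan]; ring⟩
  refine ⟨f n, AdicCompletion.mk _ _ (AdicCauchySequence.mk _ _ d hcauchy), ?_⟩
  ext k
  simp only [AdicCompletion.val_add, AdicCompletion.val_mul, AdicCompletion.mk_apply_coe,
    Submodule.mkQ_apply, Pi.add_apply, AdicCauchySequence.mk_coe]
  rw [show ((algebraMap R A (f n)).val k) = Submodule.Quotient.mk (f n) from rfl,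
    show ((algebraMap R A (ϖ ^ n)).val k) = Submodule.Quotient.mk (ϖ ^ n) from rfl]
  rw [Ideal.Quotient.mk_eq_mk, Ideal.Quotient.mk_eq_mk, Ideal.Quotient.mk_eq_mk,
    Ideal.Quotient.mk_eq_mk, ← map_mul, ← map_add]
  rw [Ideal.Quotient.eq, mem_smul_top_iff]
  have heq : (f k : R) - (f n + ϖ ^ n * d k) = (f k - f (n + k)) := by
    linear_combination hd k
  rw [heq, ← mem_smul_top_iff]
  exact SModEq.sub_mem.mp (f.property (Nat.le_add_left k n))


theorem dvd_mem_smul_top {ϖ : R} (hϖ : ϖ ∈ maximalIdeal R) {x : A} (n : ℕ)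
    (h : algebraMap R A (ϖ ^ n) ∣ x) : x ∈ ((maximalIdeal R) ^ n • ⊤ : Submodule R A) := by
  obtain ⟨c, rfl⟩ := h
  rw [← Algebra.smul_def]
  exact Submodule.smul_mem_smul (Ideal.pow_mem_pow hϖ n) Submodule.mem_top

variable [IsDomain (AdicCompletion (maximalIdeal R) R)]

theorem not_isUnit_pi {ϖ : R} (hϖ : Irreducible ϖ) : ¬ IsUnit (algebraMap R A ϖ) := by
  intro h
  have hmem : ϖ ∈ maximalIdeal R := by
    rw [hϖ.maximalIdeal_eq]; exact Ideal.mem_span_singleton_self ϖ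
  have h1 : (1 : A) = 0 := by
    refine IsHausdorff.haus (inferInstance : IsHausdorff (maximalIdeal R) A) 1 (fun n => ?_)
    rw [SModEq.zero]
    refine dvd_mem_smul_top hmem n ?_
    rw [map_pow]
    exact (h.pow n).dvd
  exact one_ne_zero h1

theorem exists_factor {ϖ : R} (hϖ : Irreducible ϖ) (x : A) (hx : x ≠ 0) :
    ∃ (n : ℕ) (u : A), IsUnit u ∧ x = u * algebraMap R A (ϖ ^ n) := by
  have hmem : ϖ ∈ maximalIdeal R := by
    rw [hϖ.maximalIdeal_eq]; exact Ideal.mem_span_singleton_self ϖ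
  have hex : ∃ n, ¬ (algebraMap R A (ϖ ^ n) ∣ x) := by
    by_contra hcon
    push_neg at hcon
    refine hx (IsHausdorff.haus (inferInstance : IsHausdorff (maximalIdeal R) A) x (fun n => ?_))
    rw [SModEq.zero]
    exact dvd_mem_smul_top hmem n (hcon n)
  classical
  let N := Nat.find hex
  have hN0 : N ≠ 0 := by
    intro h0
    have := Nat.find_spec hex
    rw [show N = Nat.find hex from rfl] at h0
    rw [h0] at this
    exact this (by simpa using Dvd.intro x rfl)
  obtain ⟨n, hn⟩ : ∃ n, N = n + 1 := ⟨N - 1, by omega⟩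
  have h1 : algebraMap R A (ϖ ^ n) ∣ x := by
    by_contra hcon
    exact absurd (Nat.find_min hex (show n < N by omega)) (by simpa using hcon)
  have h2 : ¬ algebraMap R A (ϖ ^ (n + 1)) ∣ x := by
    rw [← hn]; exact Nat.find_spec hex
  obtain ⟨u, hu⟩ := h1
  have hundvd : ¬ algebraMap R A ϖ ∣ u := by
    intro ⟨w, hw⟩
    refine h2 ⟨w, ?_⟩
    rw [hu, hw, pow_succ, map_mul]
    ring
  obtain ⟨r, c, hrc⟩ := density hϖ u 1
  rw [pow_one] at hrc
  have hr : IsUnit r := by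
    by_contra hru
    have : r ∈ maximalIdeal R := by
      rw [IsLocalRing.mem_maximalIdeal]
      exact hru
    rw [hϖ.maximalIdeal_eq, Ideal.mem_span_singleton] at this
    obtain ⟨r', rfl⟩ := this
    exact hundvd ⟨algebraMap R A r' + c, by rw [hrc, map_mul]; ring⟩
  have hone : algebraMap R A r * algebraMap R A (↑hr.unit⁻¹) = 1 := by
    rw [← map_mul, IsUnit.mul_val_inv, map_one]
  have hrw : u = algebraMap R A r * (1 + algebraMap R A ϖ * (algebraMap R A (↑hr.unit⁻¹) * c)) := by
    rw [hrc]
    linear_combination (-(algebraMap R A ϖ * c)) * hone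
  have huu : IsUnit u := by
    rw [hrw]
    exact (hr.map (algebraMap R A)).mul (isUnit_one_add hmem _)
  exact ⟨n, u, huu, by rw [hu]; ring⟩

theorem dvd_descent [NoZeroSMulDivisors R (AdicCompletion (maximalIdeal R) R)]
    {ϖ : R} (hϖ : Irreducible ϖ) {t r : R} (ht : t ≠ 0)
    (h : algebraMap R A t ∣ algebraMap R A r) : t ∣ r := by
  have hinj : Function.Injective (algebraMap R A) :=
    FaithfulSMul.algebraMap_injective R _
  rcases eq_or_ne r 0 with rfl | hr
  · exact dvd_zero t
  obtain ⟨a, ua, hta⟩ := IsDiscreteValuationRing.eq_unit_mul_pow_irreducible ht hϖ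
  obtain ⟨b, ub, hrb⟩ := IsDiscreteValuationRing.eq_unit_mul_pow_irreducible hr hϖ
  rcases le_or_gt a b with hab | hba
  · rw [hta, hrb]
    exact mul_dvd_mul (ua.isUnit.dvd) (pow_dvd_pow ϖ hab)
  · exfalso
    obtain ⟨c, hc⟩ := h
    rw [hta, hrb] at hc
    simp only [map_mul, map_pow] at hc
    have hinv : algebraMap R A ↑ub * algebraMap R A (↑ub⁻¹ : Rˣ) = 1 := by
      rw [← map_mul, Units.mul_inv, map_one]
    have hpowA : (algebraMap R A ϖ) ^ a = (algebraMap R A ϖ) ^ b * (algebraMap R A ϖ) ^ (a - b) := by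
      rw [← pow_add]; congr 1; omega
    have hϖa : (algebraMap R A ϖ) ^ b * 1
        = (algebraMap R A ϖ) ^ b * ((algebraMap R A ϖ) ^ (a - b)
            * (algebraMap R A (↑ub⁻¹ : Rˣ) * algebraMap R A ↑ua * c)) := by
      linear_combination (algebraMap R A (↑ub⁻¹ : Rˣ)) * hc
        - (algebraMap R A ϖ) ^ b * hinv
        + ((algebraMap R A (↑ub⁻¹ : Rˣ)) * (algebraMap R A ↑ua) * c) * hpowA
    have hϖne : algebraMap R A ϖ ≠ 0 := fun h0 => hϖ.ne_zero (hinj (by rw [h0, _root_.map_zero]))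
    have hcan := mul_left_cancel₀ (pow_ne_zero b hϖne) hϖa
    have hab1 : a - b = (a - b - 1) + 1 := by omega
    refine not_isUnit_pi hϖ (isUnit_of_dvd_one
      ⟨(algebraMap R A ϖ) ^ (a - b - 1) * (algebraMap R A (↑ub⁻¹ : Rˣ) * algebraMap R A ↑ua * c), ?_⟩)
    rw [hab1] at hcan
    rw [hcan]
    ring

end Stmt14Aux



open Stmt14Aux in
set_option maxHeartbeats 1600000 in
set_option synthInstance.maxHeartbeats 400000 in

/-- Let `R` be a discrete valuation ring that is not complete, with completion `R̂`, fraction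
field `K = Q(R)`, and `K̃ = Q(R̂)`.  Then there is an `R`-module isomorphism `R̂/R ≅ K̃/K`.
(The instance hypotheses record the facts that `R̂` is again a domain and that `R → R̂` is
injective; `K → K̃` is the induced map of fraction fields.) -/
theorem stmt_14 (R : Type) [CommRing R] [IsDomain R] [IsDiscreteValuationRing R]
    (hnc : ¬ IsAdicComplete (maximalIdeal R) R)
    [IsDomain (AdicCompletion (maximalIdeal R) R)]
    [NoZeroSMulDivisors R (AdicCompletion (maximalIdeal R) R)] :
    by letI := FractionRing.liftAlgebra R (FractionRing (AdicCompletion (maximalIdeal R) R))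
       exact Nonempty
        ((AdicCompletion (maximalIdeal R) R ⧸
            LinearMap.range (AdicCompletion.of (maximalIdeal R) R)) ≃ₗ[R]
          (FractionRing (AdicCompletion (maximalIdeal R) R) ⧸
            LinearMap.range
              ((IsScalarTower.toAlgHom R (FractionRing R)
                (FractionRing (AdicCompletion (maximalIdeal R) R))).toLinearMap))) := by
  letI := FractionRing.liftAlgebra R (FractionRing (AdicCompletion (maximalIdeal R) R))
  obtain ⟨ϖ, hϖ⟩ := IsDiscreteValuationRing.exists_irreducible R
  have hinj : Function.Injective (algebraMap R (AdicCompletion (maximalIdeal R) R)) :=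
    FaithfulSMul.algebraMap_injective R _
  let Kt := FractionRing (AdicCompletion (maximalIdeal R) R)
  let Kf := FractionRing R
  let fL : AdicCompletion (maximalIdeal R) R →ₗ[R] Kt :=
    (IsScalarTower.toAlgHom R (AdicCompletion (maximalIdeal R) R) Kt).toLinearMap
  let pK : Submodule R Kt :=
    LinearMap.range ((IsScalarTower.toAlgHom R Kf Kt).toLinearMap)
  let φ : AdicCompletion (maximalIdeal R) R →ₗ[R] Kt ⧸ pK := pK.mkQ ∘ₗ fL
  have hKinj : Function.Injective (algebraMap (AdicCompletion (maximalIdeal R) R) Kt) :=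
    IsFractionRing.injective _ _
  have hcomm : ∀ z : R, algebraMap Kf Kt (algebraMap R Kf z)
      = algebraMap (AdicCompletion (maximalIdeal R) R) Kt
          (algebraMap R (AdicCompletion (maximalIdeal R) R) z) := fun z => by
    rw [← IsScalarTower.algebraMap_apply,
      IsScalarTower.algebraMap_apply R (AdicCompletion (maximalIdeal R) R) Kt]
  have hfL : ∀ x, fL x = algebraMap (AdicCompletion (maximalIdeal R) R) Kt x := fun _ => rfl
  have hpK : ∀ y : Kt, y ∈ pK ↔ ∃ k : Kf, algebraMap Kf Kt k = y := fun y => Iff.rfl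
  have hker : LinearMap.ker φ = LinearMap.range (AdicCompletion.of (maximalIdeal R) R) := by
    ext a
    simp only [LinearMap.mem_ker, LinearMap.mem_range, LinearMap.comp_apply,
      Submodule.mkQ_apply, φ]
    rw [Submodule.Quotient.mk_eq_zero, hpK, hfL]
    constructor
    · rintro ⟨k, hk⟩
      obtain ⟨r, t, htmem, hrt⟩ := IsFractionRing.div_surjective (A := R) k
      have ht : t ≠ 0 := nonZeroDivisors.ne_zero htmem
      rw [← hrt, map_div₀, hcomm r, hcomm t] at hk
      have htne : algebraMap (AdicCompletion (maximalIdeal R) R) Kt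
          (algebraMap R (AdicCompletion (maximalIdeal R) R) t) ≠ 0 := fun h0 =>
        ht (hinj (hKinj (by rw [h0, _root_.map_zero, _root_.map_zero])))
      rw [div_eq_iff htne, ← map_mul] at hk
      have heq := hKinj hk
      have hdvd : algebraMap R (AdicCompletion (maximalIdeal R) R) t
          ∣ algebraMap R (AdicCompletion (maximalIdeal R) R) r := ⟨a, by rw [heq]; ring⟩
      obtain ⟨r', hr'⟩ := dvd_descent hϖ ht hdvd
      refine ⟨r', ?_⟩
      have h2 : algebraMap R (AdicCompletion (maximalIdeal R) R) t * a
          = algebraMap R (AdicCompletion (maximalIdeal R) R) t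
              * algebraMap R (AdicCompletion (maximalIdeal R) R) r' := by
        rw [← map_mul, ← hr', heq]; ring
      have htA : algebraMap R (AdicCompletion (maximalIdeal R) R) t ≠ 0 := fun h0 =>
        ht (hinj (by rw [h0, _root_.map_zero]))
      have := (mul_left_cancel₀ htA h2).symm
      rw [algebraMap_eq_of] at this
      exact this
    · rintro ⟨r, rfl⟩
      exact ⟨algebraMap R Kf r, by rw [hcomm r, ← algebraMap_eq_of]⟩
  have hsurj : Function.Surjective φ := by
    intro y
    obtain ⟨x, rfl⟩ := Submodule.Quotient.mk_surjective pK y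
    obtain ⟨aa, s, hsmem, hx⟩ :=
      IsFractionRing.div_surjective (A := AdicCompletion (maximalIdeal R) R) x
    have hs0 : s ≠ 0 := nonZeroDivisors.ne_zero hsmem
    obtain ⟨n, u, hu, rfl⟩ := exists_factor hϖ s hs0
    obtain ⟨r, c, hrc⟩ := density hϖ ((↑hu.unit⁻¹ : AdicCompletion (maximalIdeal R) R) * aa) n
    have haa2 : aa = u * (algebraMap R (AdicCompletion (maximalIdeal R) R) r
        + algebraMap R (AdicCompletion (maximalIdeal R) R) (ϖ ^ n) * c) := by
      have haa := hu.unit.mul_inv_cancel_left aa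
      rw [hu.unit_spec] at haa
      rw [← hrc, haa]
    have hπA : algebraMap R (AdicCompletion (maximalIdeal R) R) (ϖ ^ n) ≠ 0 := fun h0 =>
      (pow_ne_zero n hϖ.ne_zero) (hinj (by rw [h0, _root_.map_zero]))
    have hπ : algebraMap (AdicCompletion (maximalIdeal R) R) Kt
        (algebraMap R (AdicCompletion (maximalIdeal R) R) (ϖ ^ n)) ≠ 0 := fun h0 =>
      hπA (hKinj (by rw [h0, _root_.map_zero]))
    have hFu : algebraMap (AdicCompletion (maximalIdeal R) R) Kt u ≠ 0 :=
      (hu.map (algebraMap (AdicCompletion (maximalIdeal R) R) Kt)).ne_zero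
    have hxq : x * (algebraMap (AdicCompletion (maximalIdeal R) R) Kt u
          * algebraMap (AdicCompletion (maximalIdeal R) R) Kt
              (algebraMap R (AdicCompletion (maximalIdeal R) R) (ϖ ^ n)))
        = algebraMap (AdicCompletion (maximalIdeal R) R) Kt aa := by
      rw [← hx, ← map_mul, div_mul_cancel₀]
      rw [map_mul]
      exact mul_ne_zero hFu hπ
    have haaK : algebraMap (AdicCompletion (maximalIdeal R) R) Kt aa
        = algebraMap (AdicCompletion (maximalIdeal R) R) Kt u
            * (algebraMap (AdicCompletion (maximalIdeal R) R) Kt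
                (algebraMap R (AdicCompletion (maximalIdeal R) R) r)
              + algebraMap (AdicCompletion (maximalIdeal R) R) Kt
                  (algebraMap R (AdicCompletion (maximalIdeal R) R) (ϖ ^ n))
                * algebraMap (AdicCompletion (maximalIdeal R) R) Kt c) := by
      rw [haa2, map_mul, map_add, map_mul]
    have hXQ : x * algebraMap (AdicCompletion (maximalIdeal R) R) Kt
          (algebraMap R (AdicCompletion (maximalIdeal R) R) (ϖ ^ n))
        = algebraMap (AdicCompletion (maximalIdeal R) R) Kt
            (algebraMap R (AdicCompletion (maximalIdeal R) R) r)
          + algebraMap (AdicCompletion (maximalIdeal R) R) Kt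
              (algebraMap R (AdicCompletion (maximalIdeal R) R) (ϖ ^ n))
            * algebraMap (AdicCompletion (maximalIdeal R) R) Kt c :=
      mul_left_cancel₀ hFu (by linear_combination hxq + haaK)
    refine ⟨c, ?_⟩
    simp only [LinearMap.comp_apply, Submodule.mkQ_apply, φ]
    rw [Submodule.Quotient.eq]
    have hmem : fL c - x = algebraMap Kf Kt
        (-(algebraMap R Kf r / algebraMap R Kf (ϖ ^ n))) := by
      rw [map_neg, map_div₀, hcomm r, hcomm (ϖ ^ n), hfL]
      rw [← neg_div, eq_div_iff hπ]
      linear_combination -hXQ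
    rw [hmem]
    exact ⟨-(algebraMap R Kf r / algebraMap R Kf (ϖ ^ n)), rfl⟩
  exact ⟨(Submodule.quotEquivOfEq _ _ hker.symm).trans (φ.quotKerEquivOfSurjective hsurj)⟩
end

section
/- Let R be a non-complete discrete valuation ring with completion R̂, K = Q(R), K̃ = Q(R̂), and suppose K̃ has infinite dimension as a K-vector space, say K̃ ≅ K^(A) with A infinite. Then there is an R-module isomorphism Hom_R(R̂, R̂/R) ≅ (K̃/K)^(B) for some infinite cardinal B > A. -/
open IsLocalRing AdicCompletion Cardinal

set_option linter.unusedSectionVars false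

namespace Stmt15Aux



variable {R : Type} [CommRing R] [IsDomain R] [IsDiscreteValuationRing R]

theorem mem_sm {ϖ : R} (hϖ : Irreducible ϖ) (n : ℕ) (x : R) :
    x ∈ ((maximalIdeal R) ^ n • ⊤ : Submodule R R) ↔ ϖ ^ n ∣ x := by
  rw [smul_eq_mul, Ideal.mul_top,
    (IsDiscreteValuationRing.irreducible_iff_uniformizer ϖ).mp hϖ, Ideal.span_singleton_pow,
    Ideal.mem_span_singleton]


/-- If `x` vanishes in `R ⧸ I^n`, then `x = ϖ^n • y`. -/
theorem eq_pow_smul_of_val_eq_zero {ϖ : R} (hϖ : Irreducible ϖ) (n : ℕ)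
    (x : AdicCompletion (maximalIdeal R) R) (hx : x.val n = 0) :
    ∃ y : AdicCompletion (maximalIdeal R) R, x = ϖ ^ n • y := by
  obtain ⟨f, rfl⟩ := AdicCompletion.mk_surjective (maximalIdeal R) R x
  have hdvd : ∀ m : ℕ, ϖ ^ n ∣ f (m + n) := by
    intro m
    have h1 : (f n : R) ∈ ((maximalIdeal R) ^ n • ⊤ : Submodule R R) := by
      rw [AdicCompletion.mk_apply_coe, Submodule.mkQ_apply, Submodule.Quotient.mk_eq_zero] at hx
      exact hx
    have h2 : f n ≡ f (m + n) [SMOD ((maximalIdeal R) ^ n • ⊤ : Submodule R R)] :=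
      f.property (Nat.le_add_left n m)
    have h3 := (SModEq.sub_mem.mp h2.symm)
    have : f (m + n) ∈ ((maximalIdeal R) ^ n • ⊤ : Submodule R R) := by
      have := Submodule.add_mem _ h3 h1
      simpa using this
    exact (mem_sm hϖ n _).mp this
  choose g hg using hdvd
  have hϖ0 : ϖ ≠ 0 := hϖ.ne_zero
  have hcau : IsAdicCauchy (maximalIdeal R) R g := by
    intro m₁ m₂ h12
    rw [SModEq.sub_mem]
    rw [mem_sm hϖ]
    have e1 : f (m₁ + n) - f (m₂ + n) ∈ ((maximalIdeal R) ^ (m₁ + n) • ⊤ : Submodule R R) :=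
      SModEq.sub_mem.mp (f.property (by omega : m₁ + n ≤ m₂ + n))
    rw [mem_sm hϖ] at e1
    obtain ⟨c, hc⟩ := e1
    refine ⟨c, ?_⟩
    have : ϖ ^ n * (g m₁ - g m₂) = ϖ ^ n * (ϖ ^ m₁ * c) := by
      rw [mul_sub, ← hg m₁, ← hg m₂, hc]; ring
    exact mul_left_cancel₀ (pow_ne_zero n hϖ0) this
  refine ⟨AdicCompletion.mk _ _ ⟨g, hcau⟩, ?_⟩
  ext m
  rw [AdicCompletion.mk_apply_coe, AdicCompletion.val_smul_apply]
  have : f m ≡ f (m + n) [SMOD ((maximalIdeal R) ^ m • ⊤ : Submodule R R)] :=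
    f.property (by omega : m ≤ m + n)
  calc Submodule.mkQ _ (f m) = Submodule.mkQ _ (f (m + n)) := this
    _ = ϖ ^ n • Submodule.mkQ ((maximalIdeal R) ^ m • ⊤ : Submodule R R) (g m) := by
        rw [hg m, ← smul_eq_mul, map_smul]




/-- Approximate any element of the completion by an element of `R` to order `n`. -/
theorem exists_approx {ϖ : R} (hϖ : Irreducible ϖ) (n : ℕ)
    (x : AdicCompletion (maximalIdeal R) R) :
    ∃ a : R, ∃ y : AdicCompletion (maximalIdeal R) R,
      x = of (maximalIdeal R) R a + ϖ ^ n • y := by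
  obtain ⟨a, ha⟩ := Submodule.Quotient.mk_surjective _ (x.val n)
  obtain ⟨y, hy⟩ := eq_pow_smul_of_val_eq_zero hϖ n (x - of (maximalIdeal R) R a) (by
    rw [AdicCompletion.val_sub_apply, AdicCompletion.of_apply, Submodule.mkQ_apply, ha, sub_self])
  exact ⟨a, y, by rw [← hy]; abel⟩

/-- In the quotient `R ⧸ I^n`, multiplication by `ϖ^n` is zero. -/
theorem pow_smul_quot_eq_zero {ϖ : R} (hϖ : Irreducible ϖ) {n k : ℕ} (hnk : n ≤ k)
    (q : R ⧸ ((maximalIdeal R) ^ n • ⊤ : Submodule R R)) : ϖ ^ k • q = 0 := by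
  obtain ⟨a, rfl⟩ := Submodule.Quotient.mk_surjective _ q
  rw [← Submodule.Quotient.mk_smul, Submodule.Quotient.mk_eq_zero]
  rw [mem_sm hϖ]
  exact Dvd.dvd.mul_right (pow_dvd_pow ϖ hnk) a

theorem isUnit_one_sub_pow_smul {ϖ : R} (hϖ : Irreducible ϖ)
    (y : AdicCompletion (maximalIdeal R) R) :
    IsUnit (1 - ϖ • y) := by
  set z : AdicCompletion (maximalIdeal R) R := ϖ • y with hz
  have hzk : ∀ k m : ℕ, m ≤ k → (z ^ k).val m = 0 := by
    intro k m hmk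
    rw [hz, smul_pow, AdicCompletion.val_smul]
    exact pow_smul_quot_eq_zero hϖ hmk _
  -- the geometric series as an element of the completion
  have compat : ∀ {m n : ℕ} (hmn : m ≤ n),
      AdicCompletion.transitionMap (maximalIdeal R) R hmn
        ((∑ k ∈ Finset.range n, z ^ k).val n) = (∑ k ∈ Finset.range m, z ^ k).val m := by
    intro m n hmn
    rw [(∑ k ∈ Finset.range n, z ^ k).property hmn]
    rw [AdicCompletion.val_sum_apply, AdicCompletion.val_sum_apply]
    rw [← Finset.sum_range_add_sum_Ico _ hmn]
    have : ∀ k ∈ Finset.Ico m n, (z ^ k).val m = 0 := fun k hk =>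
      hzk k m (Finset.mem_Ico.mp hk).1
    rw [Finset.sum_eq_zero this, add_zero]
  set w : AdicCompletion (maximalIdeal R) R :=
    ⟨fun n => (∑ k ∈ Finset.range n, z ^ k).val n, compat⟩ with hw
  have hmul : (1 - z) * w = 1 := by
    ext n
    rw [AdicCompletion.val_mul]
    have hwn : w.val n = (∑ k ∈ Finset.range n, z ^ k).val n := rfl
    rw [hwn, ← AdicCompletion.val_mul]
    have : (1 - z) * ∑ k ∈ Finset.range n, z ^ k = 1 - z ^ n := by
      have := geom_sum_mul z n
      linear_combination -this
    rw [this, AdicCompletion.val_sub_apply, hzk n n le_rfl, sub_zero]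
  exact IsUnit.of_mul_eq_one _ hmul

/-- An element whose image in `R ⧸ I` is nonzero is a unit. -/
theorem isUnit_of_val_one_ne_zero {ϖ : R} (hϖ : Irreducible ϖ)
    (x : AdicCompletion (maximalIdeal R) R) (hx : x.val 1 ≠ 0) : IsUnit x := by
  obtain ⟨a, ha⟩ := Submodule.Quotient.mk_surjective _ (x.val 1)
  have ha' : a ∉ maximalIdeal R := by
    intro h
    apply hx
    rw [← ha, Submodule.Quotient.mk_eq_zero]
    simpa [pow_one] using (by simpa [smul_eq_mul, Ideal.mul_top, pow_one] using h :
      a ∈ ((maximalIdeal R) ^ 1 • ⊤ : Submodule R R))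
  obtain ⟨b, hb⟩ := (IsLocalRing.notMem_maximalIdeal.mp ha').exists_left_inv
  have hofsmul : of (maximalIdeal R) R b * x = b • x := by
    rw [Algebra.smul_def]; rfl
  -- b * a = 1
  have hval : (of (maximalIdeal R) R b * x).val 1 = (1 : _) := by
    rw [hofsmul, AdicCompletion.val_smul_apply, ← ha, ← Submodule.Quotient.mk_smul]
    have hba : (b : R) • a = 1 := by rw [smul_eq_mul, hb]
    rw [hba]; rfl
  have hz : ((1 : AdicCompletion (maximalIdeal R) R) - of (maximalIdeal R) R b * x).val 1 = 0 := by
    rw [AdicCompletion.val_sub_apply, hval, AdicCompletion.val_one, sub_self]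
  obtain ⟨y, hy⟩ := eq_pow_smul_of_val_eq_zero hϖ 1 _ hz
  rw [pow_one] at hy
  have : IsUnit (of (maximalIdeal R) R b * x) := by
    have := isUnit_one_sub_pow_smul hϖ y
    rw [← hy] at this
    simpa using this
  exact isUnit_of_mul_isUnit_right this

/-- Every nonzero element of the completion is `ϖ^n` times a unit. -/
theorem exists_pow_smul_unit {ϖ : R} (hϖ : Irreducible ϖ)
    (x : AdicCompletion (maximalIdeal R) R) (hx : x ≠ 0) :
    ∃ (n : ℕ) (u : AdicCompletion (maximalIdeal R) R), IsUnit u ∧ x = ϖ ^ n • u := by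
  have hne : ∃ n, x.val n ≠ 0 := by
    by_contra h
    push_neg at h
    exact hx (by ext n; rw [h n, AdicCompletion.val_zero_apply])
  classical
  have hNspec : x.val (Nat.find hne) ≠ 0 := Nat.find_spec hne
  have hN1 : Nat.find hne ≠ 0 := by
    intro h0
    apply hNspec
    rw [h0]
    have htop : ((maximalIdeal R) ^ 0 • ⊤ : Submodule R R) = ⊤ := by simp
    have := Submodule.Quotient.subsingleton_iff.mpr htop
    exact Subsingleton.elim _ _
  have hprev : x.val (Nat.find hne - 1) = 0 := by
    by_contra h
    exact (Nat.find_min hne (by omega)) h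
  obtain ⟨N, hN1', hNspec', hprev'⟩ : ∃ N : ℕ, N ≠ 0 ∧ x.val N ≠ 0 ∧ x.val (N - 1) = 0 :=
    ⟨Nat.find hne, hN1, hNspec, hprev⟩
  clear hNspec hprev hN1 hne
  obtain ⟨y, hy⟩ := eq_pow_smul_of_val_eq_zero hϖ (N - 1) x hprev'
  have hy1 : y.val 1 ≠ 0 := by
    intro h0
    obtain ⟨y₂, hy₂⟩ := eq_pow_smul_of_val_eq_zero hϖ 1 y h0
    apply hNspec'
    rw [hy, hy₂, pow_one, smul_smul, ← pow_succ]
    have hNs : N - 1 + 1 = N := by omega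
    rw [hNs, AdicCompletion.val_smul]
    exact pow_smul_quot_eq_zero hϖ le_rfl _
  exact ⟨N - 1, y, isUnit_of_val_one_ne_zero hϖ y hy1, hy⟩




variable (R)
variable (K Kt : Type) [Field K] [Algebra R K] [IsFractionRing R K]
  [IsDomain (AdicCompletion (maximalIdeal R) R)]
  [NoZeroSMulDivisors R (AdicCompletion (maximalIdeal R) R)]
  [Field Kt] [Algebra (AdicCompletion (maximalIdeal R) R) Kt]
  [IsFractionRing (AdicCompletion (maximalIdeal R) R) Kt]
  [Algebra R Kt] [IsScalarTower R (AdicCompletion (maximalIdeal R) R) Kt]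
  [Algebra K Kt] [IsScalarTower R K Kt]

/-- The canonical `R`-linear map from the completion into its fraction field. -/
noncomputable def iota : AdicCompletion (maximalIdeal R) R →ₗ[R] Kt :=
  (IsScalarTower.toAlgHom R (AdicCompletion (maximalIdeal R) R) Kt).toLinearMap

theorem iota_apply (x : AdicCompletion (maximalIdeal R) R) :
    iota R Kt x = algebraMap (AdicCompletion (maximalIdeal R) R) Kt x := rfl

theorem iota_injective : Function.Injective (iota R Kt) :=
  IsFractionRing.injective (AdicCompletion (maximalIdeal R) R) Kt

theorem of_eq_algebraMap (a : R) :
    of (maximalIdeal R) R a = algebraMap R (AdicCompletion (maximalIdeal R) R) a := rfl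

theorem iota_of (a : R) : iota R Kt (of (maximalIdeal R) R a) = algebraMap R Kt a := by
  rw [iota_apply, of_eq_algebraMap, ← IsScalarTower.algebraMap_apply]

/-- Any module over a field extension of `R` has invertible `R⁰`-action. -/
theorem map_units_of_module {F : Type} [Field F] [Algebra R F]
    (hinj : Function.Injective (algebraMap R F)) (V : Type) [AddCommGroup V] [Module R V]
    [Module F V] [IsScalarTower R F V] (s : nonZeroDivisors R) :
    IsUnit (algebraMap R (Module.End R V) s) := by
  rw [Module.End.isUnit_iff]
  have hs : (algebraMap R F s : F) ≠ 0 :=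
    (map_ne_zero_iff _ hinj).mpr (nonZeroDivisors.ne_zero s.2)
  have hact : ∀ v : V, (algebraMap R (Module.End R V) s) v = (algebraMap R F s) • v := by
    intro v
    rw [Module.algebraMap_end_apply, algebraMap_smul]
  constructor
  · intro v w hvw
    rw [hact, hact] at hvw
    have h2 := congrArg (fun u => (algebraMap R F s)⁻¹ • u) hvw
    rw [inv_smul_smul₀ hs, inv_smul_smul₀ hs] at h2
    exact h2
  · intro v
    refine ⟨(algebraMap R F s)⁻¹ • v, ?_⟩
    rw [hact, smul_inv_smul₀ hs]

theorem algebraMap_R_Kt_injective : Function.Injective (algebraMap R Kt) := by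
  rw [IsScalarTower.algebraMap_eq R (AdicCompletion (maximalIdeal R) R) Kt]
  exact (IsFractionRing.injective (AdicCompletion (maximalIdeal R) R) Kt).comp
    (FaithfulSMul.algebraMap_injective R (AdicCompletion (maximalIdeal R) R))

theorem isLocalizedModule_iota : IsLocalizedModule (nonZeroDivisors R) (iota R Kt) := by
  obtain ⟨ϖ, hϖ⟩ := IsDiscreteValuationRing.exists_irreducible R
  constructor
  · exact map_units_of_module R (algebraMap_R_Kt_injective R Kt) Kt
  · intro y
    obtain ⟨⟨a, d⟩, hy⟩ := IsLocalization.surj (nonZeroDivisors (AdicCompletion (maximalIdeal R) R)) y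
    have hd0 : (d : AdicCompletion (maximalIdeal R) R) ≠ 0 := nonZeroDivisors.ne_zero d.2
    obtain ⟨n, u, hu, hd_eq⟩ := exists_pow_smul_unit hϖ (d : _) hd0
    obtain ⟨U, hU⟩ := hu
    have hϖn : (ϖ ^ n : R) ∈ nonZeroDivisors R :=
      mem_nonZeroDivisors_of_ne_zero (pow_ne_zero n hϖ.ne_zero)
    refine ⟨⟨a * ↑U⁻¹, ⟨ϖ ^ n, hϖn⟩⟩, ?_⟩
    have hU0 : (U : AdicCompletion (maximalIdeal R) R) ≠ 0 := U.ne_zero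
    have hιu : iota R Kt u ≠ 0 := by
      rw [← hU]
      intro h
      exact hU0 (iota_injective R Kt (by rw [h, _root_.map_zero]))
    show (ϖ ^ n : R) • y = iota R Kt (a * ↑U⁻¹)
    have hιd : iota R Kt (d : AdicCompletion (maximalIdeal R) R)
        = (ϖ ^ n : R) • iota R Kt u := by
      rw [hd_eq, map_smul]
    apply mul_right_cancel₀ hιu
    rw [smul_mul_assoc]
    have h1 : y * iota R Kt (d : AdicCompletion (maximalIdeal R) R) = iota R Kt a := hy
    rw [hιd] at h1
    have h2 : (ϖ ^ n : R) • (y * iota R Kt u) = iota R Kt a := by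
      rw [← h1, mul_smul_comm]
    rw [h2, iota_apply, iota_apply, iota_apply, ← _root_.map_mul, mul_assoc, ← hU,
      Units.inv_mul, mul_one]
  · intro x y h
    exact ⟨1, by rw [iota_injective R Kt h]⟩

/-- The `R`-submodule `K ⊆ K̃`, as in the statement. -/
noncomputable def qSub : Submodule R Kt :=
  LinearMap.range ((IsScalarTower.toAlgHom R K Kt).toLinearMap)

/-- The natural map `R̂ → K̃/K`. -/
noncomputable def phi : AdicCompletion (maximalIdeal R) R →ₗ[R] (Kt ⧸ qSub R K Kt) :=
  (qSub R K Kt).mkQ ∘ₗ iota R Kt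

theorem ker_phi : LinearMap.ker (phi R K Kt) = LinearMap.range (of (maximalIdeal R) R) := by
  obtain ⟨ϖ, hϖ⟩ := IsDiscreteValuationRing.exists_irreducible R
  ext x
  simp only [phi, LinearMap.mem_ker, LinearMap.comp_apply, Submodule.mkQ_apply,
    Submodule.Quotient.mk_eq_zero, LinearMap.mem_range]
  constructor
  · intro hq
    obtain ⟨k, hk⟩ := hq
    obtain ⟨⟨a', s⟩, hs⟩ := IsLocalization.surj (nonZeroDivisors R) k
    obtain ⟨m, v, hv⟩ :=
      IsDiscreteValuationRing.eq_unit_mul_pow_irreducible (nonZeroDivisors.ne_zero s.2) hϖ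
    have hk' : algebraMap K Kt k = iota R Kt x := hk
    have h4 : (↑s : R) • x = of (maximalIdeal R) R a' := by
      apply iota_injective R Kt
      rw [map_smul, iota_of, ← hk', Algebra.smul_def, IsScalarTower.algebraMap_apply R K Kt,
        ← _root_.map_mul, mul_comm, hs, ← IsScalarTower.algebraMap_apply]
    rw [hv] at h4
    have h5 : (ϖ ^ m : R) • x = of (maximalIdeal R) R ((↑v⁻¹ : R) * a') := by
      have h6 := congrArg (fun z => (↑v⁻¹ : R) • z) h4
      rw [smul_smul, ← mul_assoc, Units.inv_mul, one_mul, ← map_smul, smul_eq_mul] at h6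
      exact h6
    have h7 : (of (maximalIdeal R) R ((↑v⁻¹ : R) * a')).val m = 0 := by
      rw [← h5, AdicCompletion.val_smul]
      exact pow_smul_quot_eq_zero hϖ le_rfl _
    rw [AdicCompletion.of_apply, Submodule.mkQ_apply, Submodule.Quotient.mk_eq_zero,
      mem_sm hϖ] at h7
    obtain ⟨c, hc⟩ := h7
    refine ⟨c, ?_⟩
    apply smul_right_injective (AdicCompletion (maximalIdeal R) R)
      (pow_ne_zero m hϖ.ne_zero)
    show (ϖ ^ m : R) • of (maximalIdeal R) R c = (ϖ ^ m : R) • x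
    rw [h5, hc, ← map_smul, smul_eq_mul]
  · rintro ⟨a, rfl⟩
    exact ⟨algebraMap R K a, by
      rw [iota_of]
      exact (IsScalarTower.algebraMap_apply R K Kt a).symm⟩

theorem phi_surjective : Function.Surjective (phi R K Kt) := by
  obtain ⟨ϖ, hϖ⟩ := IsDiscreteValuationRing.exists_irreducible R
  intro cbar
  obtain ⟨t, rfl⟩ := Submodule.Quotient.mk_surjective _ cbar
  haveI := isLocalizedModule_iota R Kt
  obtain ⟨⟨b, s⟩, hbs⟩ := IsLocalizedModule.surj (nonZeroDivisors R) (iota R Kt) t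
  obtain ⟨m, v, hv⟩ :=
    IsDiscreteValuationRing.eq_unit_mul_pow_irreducible (nonZeroDivisors.ne_zero s.2) hϖ
  have h1 : (ϖ ^ m : R) • t = iota R Kt ((↑v⁻¹ : R) • b) := by
    have hbs' : (↑s : R) • t = iota R Kt b := hbs
    rw [hv] at hbs'
    have h6 := congrArg (fun z => (↑v⁻¹ : R) • z) hbs'
    rw [smul_smul, ← mul_assoc, Units.inv_mul, one_mul] at h6
    rw [h6, map_smul]
  obtain ⟨a, c, hac⟩ := exists_approx hϖ m ((↑v⁻¹ : R) • b)
  have h2 : (ϖ ^ m : R) • (t - iota R Kt c) = algebraMap R Kt a := by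
    rw [smul_sub, h1, hac, map_add, map_smul, iota_of, add_sub_cancel_right]
  have hϖK0 : algebraMap R K (ϖ ^ m) ≠ 0 :=
    (map_ne_zero_iff _ (IsFractionRing.injective R K)).mpr (pow_ne_zero m hϖ.ne_zero)
  have hϖm0 : algebraMap R Kt (ϖ ^ m) ≠ 0 :=
    (map_ne_zero_iff _ (algebraMap_R_Kt_injective R Kt)).mpr (pow_ne_zero m hϖ.ne_zero)
  have hmem : t - iota R Kt c ∈ qSub R K Kt := by
    refine ⟨algebraMap R K a / algebraMap R K (ϖ ^ m), ?_⟩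
    apply mul_left_cancel₀ hϖm0
    have hKdiv : algebraMap R K (ϖ ^ m) * (algebraMap R K a / algebraMap R K (ϖ ^ m))
        = algebraMap R K a := by
      rw [mul_comm]
      exact div_mul_cancel₀ _ hϖK0
    calc algebraMap R Kt (ϖ ^ m) *
          (IsScalarTower.toAlgHom R K Kt).toLinearMap
            (algebraMap R K a / algebraMap R K (ϖ ^ m))
        = algebraMap K Kt (algebraMap R K (ϖ ^ m)
            * (algebraMap R K a / algebraMap R K (ϖ ^ m))) := by
          rw [_root_.map_mul, ← IsScalarTower.algebraMap_apply]; rfl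
      _ = algebraMap R Kt a := by rw [hKdiv, ← IsScalarTower.algebraMap_apply]
      _ = algebraMap R Kt (ϖ ^ m) * (t - iota R Kt c) := by
          rw [← h2, Algebra.smul_def]
  refine ⟨c, ?_⟩
  show Submodule.Quotient.mk (iota R Kt c) = Submodule.Quotient.mk t
  rw [Submodule.Quotient.eq]
  rw [← neg_sub]
  exact Submodule.neg_mem _ hmem

/-- `R̂/R ≅ K̃/K` as `R`-modules. -/
noncomputable def quotEquiv :
    (AdicCompletion (maximalIdeal R) R ⧸ LinearMap.range (of (maximalIdeal R) R))
      ≃ₗ[R] (Kt ⧸ qSub R K Kt) :=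
  (Submodule.quotEquivOfEq _ _ (ker_phi R K Kt).symm).trans
    ((phi R K Kt).quotKerEquivOfSurjective (phi_surjective R K Kt))

/-- The submodule `K ⊆ K̃` as a `K`-submodule. -/
noncomputable def qSubK : Submodule K Kt := LinearMap.range (Algebra.linearMap K Kt)

theorem qSub_eq : qSub R K Kt = (qSubK K Kt).restrictScalars R := by
  ext x
  constructor
  · rintro ⟨k, rfl⟩; exact ⟨k, rfl⟩
  · rintro ⟨k, rfl⟩; exact ⟨k, rfl⟩

/-- `K̃/K` (as `R`-quotient) is `R`-isomorphic to the `K`-quotient. -/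
noncomputable def quotKEquiv : (Kt ⧸ qSub R K Kt) ≃ₗ[R] (Kt ⧸ qSubK K Kt) :=
  (Submodule.quotEquivOfEq _ _ (qSub_eq R K Kt)).trans
    (Submodule.Quotient.restrictScalarsEquiv R (qSubK K Kt))

section V
variable (V : Type) [AddCommGroup V] [Module R V] [Module K V] [IsScalarTower R K V]

/-- Precomposition with `R̂ → K̃` is a `K`-linear equivalence on hom modules. -/
noncomputable def homEquiv1 : (Kt →ₗ[R] V) ≃ₗ[K] (AdicCompletion (maximalIdeal R) R →ₗ[R] V) :=
  letI := isLocalizedModule_iota R Kt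
  { toFun := fun g => g ∘ₗ iota R Kt
    map_add' := fun g₁ g₂ => rfl
    map_smul' := fun k g => rfl
    invFun := fun f => IsLocalizedModule.lift (nonZeroDivisors R) (iota R Kt) f
      (map_units_of_module R (IsFractionRing.injective R K) V)
    left_inv := fun g => IsLocalizedModule.lift_unique (nonZeroDivisors R) (iota R Kt) _
      (map_units_of_module R (IsFractionRing.injective R K) V) g rfl
    right_inv := fun f => IsLocalizedModule.lift_comp (nonZeroDivisors R) (iota R Kt) f
      (map_units_of_module R (IsFractionRing.injective R K) V) }

/-- `Hom_R(R̂, V) ≅ Hom_K(K̃, V)` for any `K`-vector space `V`. -/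
noncomputable def homEquivV :
    (AdicCompletion (maximalIdeal R) R →ₗ[R] V) ≃ₗ[K] (Kt →ₗ[K] V) :=
  (homEquiv1 R K Kt V).symm.trans
    (LinearMap.extendScalarsOfIsLocalizationEquiv (nonZeroDivisors R) K)

theorem rank_hom_gt [Nontrivial V] {A : Cardinal} (hA : ℵ₀ ≤ A)
    (hrank : Module.rank K Kt = A) : A < Module.rank K (Kt →ₗ[K] V) := by
  obtain ⟨v₀, hv₀⟩ := exists_ne (0 : V)
  have hinj : Function.Injective (LinearMap.llcomp (σ₁₂ := RingHom.id K) (σ₁₃ := RingHom.id K) K Kt K V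
      (LinearMap.toSpanSingleton K V v₀)) := by
    intro g₁ g₂ h
    ext x
    have := LinearMap.congr_fun h x
    simp only [LinearMap.llcomp_apply, LinearMap.toSpanSingleton_apply] at this
    have h2 : (g₁ x - g₂ x) • v₀ = 0 := by rw [sub_smul, this, sub_self]
    rcases smul_eq_zero.mp h2 with h3 | h3
    · exact sub_eq_zero.mp h3
    · exact absurd h3 hv₀
  have h1 : Module.rank K (Kt →ₗ[K] K) ≤ Module.rank K (Kt →ₗ[K] V) :=
    LinearMap.rank_le_of_injective _ hinj
  have h2 : Module.rank K Kt < Module.rank K (Kt →ₗ[K] K) :=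
    rank_lt_rank_dual (by rw [hrank]; exact hA)
  rw [hrank] at h2
  exact lt_of_lt_of_le h2 h1

end V

theorem nontrivial_quotK (h : ℵ₀ ≤ Module.rank K Kt) : Nontrivial (Kt ⧸ qSubK K Kt) := by
  apply Submodule.Quotient.nontrivial_iff.mpr
  intro htop
  have hsurj : Function.Surjective (Algebra.linearMap K Kt) := by
    rw [← LinearMap.range_eq_top]; exact htop
  have hle : Module.rank K Kt ≤ Module.rank K K :=
    LinearMap.rank_le_of_surjective _ hsurj
  rw [Module.rank_self] at hle
  exact absurd (h.trans hle) (not_le.mpr Cardinal.one_lt_aleph0)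



theorem main (A : Cardinal) (hA : ℵ₀ ≤ A) (hrank : Module.rank K Kt = A) :
    ∃ B : Cardinal, A < B ∧ ℵ₀ ≤ B ∧
      Nonempty ((AdicCompletion (maximalIdeal R) R →ₗ[R]
          (AdicCompletion (maximalIdeal R) R ⧸
            LinearMap.range (AdicCompletion.of (maximalIdeal R) R))) ≃ₗ[R]
        (B.out →₀ (Kt ⧸ LinearMap.range ((IsScalarTower.toAlgHom R K Kt).toLinearMap)))) := by
  classical
  haveI hVnt := nontrivial_quotK K Kt (by rw [hrank]; exact hA)
  set V := Kt ⧸ qSubK K Kt with hV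
  set B := Module.rank K (AdicCompletion (maximalIdeal R) R →ₗ[R] V) with hB
  have hAB : A < B := by
    rw [hB, (homEquivV R K Kt V).rank_eq]
    exact rank_hom_gt K Kt V hA hrank
  have hBinf : ℵ₀ ≤ B := hA.trans hAB.le
  have hd1 : 1 ≤ Module.rank K V := Cardinal.one_le_iff_pos.mpr rank_pos
  have hdA : Module.rank K V ≤ A := by rw [← hrank]; exact rank_quotient_le _
  have hfr : Module.rank K (B.out →₀ V) = B := by
    rw [rank_finsupp', Cardinal.mk_out]
    refine le_antisymm ?_ ?_
    · calc B * Module.rank K V ≤ B * B := mul_le_mul_right (hdA.trans hAB.le) B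
        _ = B := Cardinal.mul_eq_self hBinf
    · conv_lhs => rw [← mul_one B]
      exact mul_le_mul_right hd1 B
  obtain ⟨eK⟩ : Nonempty ((AdicCompletion (maximalIdeal R) R →ₗ[R] V) ≃ₗ[K] (B.out →₀ V)) :=
    nonempty_linearEquiv_of_rank_eq (by rw [hfr])
  refine ⟨B, hAB, hBinf, ⟨?_⟩⟩
  have e_q : (Kt ⧸ qSub R K Kt) ≃ₗ[R] V := quotKEquiv R K Kt
  exact ((LinearEquiv.congrRight ((quotEquiv R K Kt).trans e_q)).trans
    (eK.restrictScalars R)).trans (Finsupp.mapRange.linearEquiv e_q.symm)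

end Stmt15Aux

open IsLocalRing

/-- Let `R` be a non-complete discrete valuation ring with completion `R̂`, `K = Q(R)`,
`K̃ = Q(R̂)`, and suppose `K̃ ≅ K^(A)` as a `K`-vector space with `A` infinite (i.e.
`dim_K K̃ = A`).  Then there is an `R`-module isomorphism
`Hom_R(R̂, R̂/R) ≅ (K̃/K)^(B)` for some infinite cardinal `B > A`. -/
theorem stmt_15 (R : Type) [CommRing R] [IsDomain R] [IsDiscreteValuationRing R]
    (hnc : ¬ IsAdicComplete (maximalIdeal R) R)
    [IsDomain (AdicCompletion (maximalIdeal R) R)]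
    [NoZeroSMulDivisors R (AdicCompletion (maximalIdeal R) R)] :
    by letI := FractionRing.liftAlgebra R (FractionRing (AdicCompletion (maximalIdeal R) R))
       exact ∀ A : Cardinal, Cardinal.aleph0 ≤ A →
        Module.rank (FractionRing R) (FractionRing (AdicCompletion (maximalIdeal R) R)) = A →
        ∃ B : Cardinal, A < B ∧ Cardinal.aleph0 ≤ B ∧
          Nonempty
            ((AdicCompletion (maximalIdeal R) R →ₗ[R]
                (AdicCompletion (maximalIdeal R) R ⧸
                  LinearMap.range (AdicCompletion.of (maximalIdeal R) R))) ≃ₗ[R]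
              (B.out →₀
                (FractionRing (AdicCompletion (maximalIdeal R) R) ⧸
                  LinearMap.range
                    ((IsScalarTower.toAlgHom R (FractionRing R)
                      (FractionRing (AdicCompletion (maximalIdeal R) R))).toLinearMap)))) := by
  letI := FractionRing.liftAlgebra R (FractionRing (AdicCompletion (maximalIdeal R) R))
  intro A hA hrank
  exact Stmt15Aux.main R (FractionRing R)
    (FractionRing (AdicCompletion (maximalIdeal R) R)) A hA hrank
end
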